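/- arXiv:0710.5908 — 4 statements merged into one kernel-verified Lean document; each statement's English description precedes it below -/
import Mathlib

section
/- Let H be a complex Hilbert space, M ≥ 1 an integer, and let L_1,…,L_M and R_1,…,R_M be bounded operators on H such that R_j R_k = R_k R_j for all j,k and L_k R_n = R_n L_k whenever n ≠ k. Given real numbers τ_1,…,τ_M, set L̃_k = L_k + Σ_{n=1, n≠k}^{M} R_n. Then for every 1 ≤ m ≤ M one has the factorization e^{−iτ_m L̃_m} ⋯ e^{−iτ_2 L̃_2} e^{−iτ_1 L̃_1} = U_m^− · e^{−iτ_m L_m} ⋯ e^{−iτ_1 L_1} · U_m^+, where U_m^− = exp(−i Σ_{j=1}^{m} Σ_{k=1}^{j−1} τ_j R_k) and U_m^+ = exp(−i Σ_{j=1}^{m} Σ_{k=j+1}^{M} τ_j R_k). Moreover, if ψ ∈ H satisfies R_k ψ = 0 for all k, then U_m^− ψ = ψ and U_m^+ ψ = ψ. -/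
open scoped BigOperators

/-- Ordered product `f m * f (m-1) * ⋯ * f 1` of elements of a monoid. -/
def ordProd {A : Type*} [Monoid A] (f : ℕ → A) : ℕ → A
  | 0 => 1
  | m + 1 => f (m + 1) * ordProd f m

lemma ordProd_commute {A : Type*} [Monoid A] (f : ℕ → A) (x : A) (m : ℕ)
    (h : ∀ k, 1 ≤ k → k ≤ m → Commute x (f k)) : Commute x (ordProd f m) := by
  induction m with
  | zero => simpa [ordProd] using Commute.one_right x
  | succ n ih =>
      rw [ordProd]
      exact (h (n+1) (by omega) le_rfl).mul_right (ih fun k h1 h2 => h k h1 (by omega))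

lemma exp_apply_eq_self' {H : Type*} [NormedAddCommGroup H] [InnerProductSpace ℂ H]
    [CompleteSpace H] (A : H →L[ℂ] H) (ψ : H) (h : A ψ = 0) :
    NormedSpace.exp A ψ = ψ := by
  have hs : Summable (fun n : ℕ => ((n.factorial : ℂ))⁻¹ • A ^ n) :=
    NormedSpace.expSeries_summable' A
  have key : NormedSpace.exp A ψ = ∑' n : ℕ, (((n.factorial : ℂ))⁻¹ • A ^ n) ψ := by
    rw [NormedSpace.exp_eq_tsum ℂ]
    exact ((ContinuousLinearMap.apply ℂ H ψ).map_tsum hs)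
  rw [key]
  have hzero : ∀ n : ℕ, n ≠ 0 → (((n.factorial : ℂ))⁻¹ • A ^ n) ψ = 0 := by
    intro n hn
    obtain ⟨k, rfl⟩ := Nat.exists_eq_succ_of_ne_zero hn
    have hk : (A ^ (k+1)) ψ = (A ^ k) (A ψ) := by rw [pow_succ]; rfl
    simp [ContinuousLinearMap.smul_apply, hk, h]
  rw [tsum_eq_single 0 hzero]
  simp

lemma shuffle' {A : Type*} [Monoid A] (a l b s G t : A)
    (hbs : Commute b s) (hbG : Commute b G) (hls : Commute l s) :
    (a * (l * b)) * (s * G * t) = (a * s) * (l * G) * (b * t) := by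
  simp only [mul_assoc]
  rw [hbs.left_comm, hbG.left_comm, hls.left_comm]

/-- Decomposition of the repeated-interaction propagator: splitting off the trivial
dynamics.  Here `L k` is the interacting Liouvillean at step `k`, `R k` the free
Liouvillean of the `k`-th chain element, and `Ltil k = L k + ∑_{n ≠ k} R n`. -/
theorem repeated_interaction_propagator_decomposition
    {H : Type*} [NormedAddCommGroup H] [InnerProductSpace ℂ H] [CompleteSpace H]
    (M : ℕ) (hM : 1 ≤ M)
    (L R : ℕ → (H →L[ℂ] H)) (τ : ℕ → ℝ)
    (hRR : ∀ j ∈ Finset.Icc 1 M, ∀ k ∈ Finset.Icc 1 M, R j * R k = R k * R j)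
    (hLR : ∀ k ∈ Finset.Icc 1 M, ∀ n ∈ Finset.Icc 1 M, n ≠ k → L k * R n = R n * L k)
    (Ltil : ℕ → (H →L[ℂ] H))
    (hLtil : ∀ k, Ltil k = L k + ∑ n ∈ (Finset.Icc 1 M).erase k, R n) :
    ∀ m, 1 ≤ m → m ≤ M →
      (ordProd (fun k => NormedSpace.exp ((-(Complex.I * (τ k : ℂ))) • Ltil k)) m
        = NormedSpace.exp
            ((-(Complex.I)) • ∑ j ∈ Finset.Icc 1 m, ∑ k ∈ Finset.Ico 1 j, (τ j : ℂ) • R k)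
          * ordProd (fun k => NormedSpace.exp ((-(Complex.I * (τ k : ℂ))) • L k)) m
          * NormedSpace.exp
            ((-(Complex.I)) • ∑ j ∈ Finset.Icc 1 m, ∑ k ∈ Finset.Icc (j+1) M, (τ j : ℂ) • R k))
      ∧ ∀ ψ : H, (∀ k ∈ Finset.Icc 1 M, R k ψ = 0) →
        (NormedSpace.exp
            ((-(Complex.I)) • ∑ j ∈ Finset.Icc 1 m, ∑ k ∈ Finset.Ico 1 j, (τ j : ℂ) • R k)) ψ = ψ
        ∧ (NormedSpace.exp
            ((-(Complex.I)) • ∑ j ∈ Finset.Icc 1 m, ∑ k ∈ Finset.Icc (j+1) M, (τ j : ℂ) • R k)) ψ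
          = ψ := by
  -- basic commutation facts
  have cRR : ∀ {j k : ℕ}, 1 ≤ j → j ≤ M → 1 ≤ k → k ≤ M → Commute (R j) (R k) := by
    intro j k h1 h2 h3 h4
    exact hRR j (Finset.mem_Icc.mpr ⟨h1, h2⟩) k (Finset.mem_Icc.mpr ⟨h3, h4⟩)
  have cLR : ∀ {k n : ℕ}, 1 ≤ k → k ≤ M → 1 ≤ n → n ≤ M → n ≠ k → Commute (L k) (R n) := by
    intro k n h1 h2 h3 h4 h5
    exact hLR k (Finset.mem_Icc.mpr ⟨h1, h2⟩) n (Finset.mem_Icc.mpr ⟨h3, h4⟩) h5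
  -- commuting with a single scaled sum
  have csum : ∀ (x : H →L[ℂ] H) (s : Finset ℕ) (c : ℕ → ℂ),
      (∀ n ∈ s, Commute x (R n)) → Commute x (∑ k ∈ s, c k • R k) := by
    intro x s c hx
    exact Commute.sum_right _ _ _ fun k hk => (hx k hk).smul_right _
  -- commuting with the double sums
  have cdsum : ∀ (x : H →L[ℂ] H) (m' : ℕ) (F : ℕ → Finset ℕ),
      (∀ j ∈ Finset.Icc 1 m', ∀ n ∈ F j, Commute x (R n)) →
      Commute x (∑ j ∈ Finset.Icc 1 m', ∑ k ∈ F j, (τ j : ℂ) • R k) := by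
    intro x m' F hx
    exact Commute.sum_right _ _ _ fun j hj => csum x (F j) _ (hx j hj)
  have hpull : ∀ (s : Finset ℕ) (a : ℂ),
      (-(Complex.I * a)) • (∑ k ∈ s, R k) = (-(Complex.I)) • ∑ k ∈ s, a • R k := by
    intro s a
    rw [Finset.smul_sum, Finset.smul_sum]
    exact Finset.sum_congr rfl fun k _ => by rw [smul_smul, neg_mul]
  have herase : ∀ p : ℕ, 1 ≤ p → p ≤ M →
      ∑ n ∈ (Finset.Icc 1 M).erase p, R n
        = (∑ n ∈ Finset.Ico 1 p, R n) + ∑ n ∈ Finset.Icc (p+1) M, R n := by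
    intro p h1 h2
    rw [← Finset.sum_union (Finset.disjoint_left.mpr (by
      intro x hx hx2
      simp only [Finset.mem_Ico] at hx
      simp only [Finset.mem_Icc] at hx2
      omega))]
    apply Finset.sum_congr _ fun _ _ => rfl
    ext x
    simp only [Finset.mem_erase, Finset.mem_Icc, Finset.mem_union, Finset.mem_Ico]
    omega
  -- the main product formula, by induction
  have main : ∀ m, m ≤ M →
      ordProd (fun k => NormedSpace.exp ((-(Complex.I * (τ k : ℂ))) • Ltil k)) m
        = NormedSpace.exp
            ((-(Complex.I)) • ∑ j ∈ Finset.Icc 1 m, ∑ k ∈ Finset.Ico 1 j, (τ j : ℂ) • R k)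
          * ordProd (fun k => NormedSpace.exp ((-(Complex.I * (τ k : ℂ))) • L k)) m
          * NormedSpace.exp
            ((-(Complex.I)) • ∑ j ∈ Finset.Icc 1 m, ∑ k ∈ Finset.Icc (j+1) M, (τ j : ℂ) • R k) := by
    intro m
    induction m with
    | zero =>
        intro _
        have he : Finset.Icc 1 0 = (∅ : Finset ℕ) := Finset.Icc_eq_empty (by omega)
        simp [ordProd, he, NormedSpace.exp_zero]
    | succ m ih =>
        intro hm1
        have ihm := ih (by omega)
        have hp1 : (1:ℕ) ≤ m + 1 := by omega
        have hpM : m + 1 ≤ M := hm1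
        -- abbreviations
        set A : H →L[ℂ] H := ∑ k ∈ Finset.Ico 1 (m+1), (τ (m+1) : ℂ) • R k with hA
        set B : H →L[ℂ] H := ∑ k ∈ Finset.Icc (m+2) M, (τ (m+1) : ℂ) • R k with hB
        set Sm : H →L[ℂ] H := ∑ j ∈ Finset.Icc 1 m, ∑ k ∈ Finset.Ico 1 j, (τ j : ℂ) • R k
          with hSm
        set Tm : H →L[ℂ] H := ∑ j ∈ Finset.Icc 1 m, ∑ k ∈ Finset.Icc (j+1) M, (τ j : ℂ) • R k
          with hTm
        -- splitting of the full generator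
        have hsplit : (-(Complex.I * (τ (m+1) : ℂ))) • Ltil (m+1)
            = (-(Complex.I)) • A
              + ((-(Complex.I * (τ (m+1) : ℂ))) • L (m+1) + (-(Complex.I)) • B) := by
          rw [hLtil (m+1), herase (m+1) hp1 hpM, smul_add, smul_add, hpull, hpull, hA, hB]
          abel
        -- commutation of the three pieces
        have cAL : Commute ((-(Complex.I)) • A) ((-(Complex.I * (τ (m+1) : ℂ))) • L (m+1)) := by
          refine Commute.smul_left (Commute.smul_right ?_ _) _
          refine ((csum (L (m+1)) _ _ ?_).symm)
          intro n hn
          simp only [Finset.mem_Ico] at hn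
          exact cLR hp1 hpM hn.1 (by omega) (by omega)
        have cAB : Commute ((-(Complex.I)) • A) ((-(Complex.I)) • B) := by
          refine Commute.smul_left (Commute.smul_right ?_ _) _
          refine csum _ _ _ fun n hn => ?_
          simp only [Finset.mem_Icc] at hn
          refine (csum (R n) _ _ fun k hk => ?_).symm
          simp only [Finset.mem_Ico] at hk
          exact cRR (by omega) hn.2 hk.1 (by omega)
        have cLB : Commute ((-(Complex.I * (τ (m+1) : ℂ))) • L (m+1)) ((-(Complex.I)) • B) := by
          refine Commute.smul_left (Commute.smul_right ?_ _) _
          refine csum (L (m+1)) _ _ fun n hn => ?_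
          simp only [Finset.mem_Icc] at hn
          exact cLR hp1 hpM (by omega) hn.2 (by omega)
        -- step 1: factor the (m+1)-st exponential
        have hstep1 : NormedSpace.exp ((-(Complex.I * (τ (m+1) : ℂ))) • Ltil (m+1))
            = NormedSpace.exp ((-(Complex.I)) • A)
              * (NormedSpace.exp ((-(Complex.I * (τ (m+1) : ℂ))) • L (m+1))
                * NormedSpace.exp ((-(Complex.I)) • B)) := by
          let +nondep : NormedAlgebra ℚ (H →L[ℂ] H) := .restrictScalars ℚ ℂ (H →L[ℂ] H)
          rw [hsplit, NormedSpace.exp_add_of_commute (cAL.add_right cAB),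
            NormedSpace.exp_add_of_commute cLB]
        have hnotmem : m + 1 ∉ Finset.Icc 1 m := by
          simp only [Finset.mem_Icc]; omega
        -- commutation with the accumulated sums
        have cASm : Commute ((-(Complex.I)) • A) ((-(Complex.I)) • Sm) := by
          refine Commute.smul_left (Commute.smul_right ?_ _) _
          rw [hSm]
          refine cdsum A m _ fun j hj n hn => ?_
          simp only [Finset.mem_Icc] at hj
          simp only [Finset.mem_Ico] at hn
          rw [hA]
          refine (csum (R n) _ _ fun k hk => ?_).symm
          simp only [Finset.mem_Ico] at hk
          exact cRR hn.1 (by omega) hk.1 (by omega)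
        have cBTm : Commute ((-(Complex.I)) • B) ((-(Complex.I)) • Tm) := by
          refine Commute.smul_left (Commute.smul_right ?_ _) _
          rw [hTm]
          refine cdsum B m _ fun j hj n hn => ?_
          simp only [Finset.mem_Icc] at hj
          simp only [Finset.mem_Icc] at hn
          rw [hB]
          refine (csum (R n) _ _ fun k hk => ?_).symm
          simp only [Finset.mem_Icc] at hk
          exact cRR (by omega) hn.2 (by omega) hk.2
        have cBSm : Commute ((-(Complex.I)) • B) ((-(Complex.I)) • Sm) := by
          refine Commute.smul_left (Commute.smul_right ?_ _) _
          rw [hSm]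
          refine cdsum B m _ fun j hj n hn => ?_
          simp only [Finset.mem_Icc] at hj
          simp only [Finset.mem_Ico] at hn
          rw [hB]
          refine (csum (R n) _ _ fun k hk => ?_).symm
          simp only [Finset.mem_Icc] at hk
          exact cRR hn.1 (by omega) (by omega) hk.2
        have cLSm : Commute ((-(Complex.I * (τ (m+1) : ℂ))) • L (m+1)) ((-(Complex.I)) • Sm) := by
          refine Commute.smul_left (Commute.smul_right ?_ _) _
          rw [hSm]
          refine cdsum (L (m+1)) m _ fun j hj n hn => ?_
          simp only [Finset.mem_Icc] at hj
          simp only [Finset.mem_Ico] at hn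
          exact cLR hp1 hpM hn.1 (by omega) (by omega)
        -- commutation of exp(-I•B) with each exp(-iτ_k L k), 1 ≤ k ≤ m
        have cBG : Commute (NormedSpace.exp ((-(Complex.I)) • B))
            (ordProd (fun k => NormedSpace.exp ((-(Complex.I * (τ k : ℂ))) • L k)) m) := by
          refine ordProd_commute _ _ _ fun k h1 h2 => ?_
          show Commute (NormedSpace.exp ((-(Complex.I)) • B))
            (NormedSpace.exp ((-(Complex.I * (τ k : ℂ))) • L k))
          refine Commute.exp ?_
          refine Commute.smul_left (Commute.smul_right ?_ _) _
          rw [hB]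
          refine (csum (L k) _ _ fun n hn => ?_).symm
          simp only [Finset.mem_Icc] at hn
          exact cLR h1 (by omega) (by omega) hn.2 (by omega)
        -- split off the top term of the accumulated sums
        have hSexp : NormedSpace.exp
              ((-(Complex.I)) • ∑ j ∈ Finset.Icc 1 (m+1), ∑ k ∈ Finset.Ico 1 j, (τ j : ℂ) • R k)
            = NormedSpace.exp ((-(Complex.I)) • A) * NormedSpace.exp ((-(Complex.I)) • Sm) := by
          let +nondep : NormedAlgebra ℚ (H →L[ℂ] H) := .restrictScalars ℚ ℂ (H →L[ℂ] H)
          rw [← Finset.insert_Icc_right_eq_Icc_add_one (by omega : (1:ℕ) ≤ m + 1),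
            Finset.sum_insert hnotmem, ← hA, ← hSm, smul_add,
            NormedSpace.exp_add_of_commute cASm]
        have hTexp : NormedSpace.exp
              ((-(Complex.I)) • ∑ j ∈ Finset.Icc 1 (m+1), ∑ k ∈ Finset.Icc (j+1) M, (τ j : ℂ) • R k)
            = NormedSpace.exp ((-(Complex.I)) • B) * NormedSpace.exp ((-(Complex.I)) • Tm) := by
          let +nondep : NormedAlgebra ℚ (H →L[ℂ] H) := .restrictScalars ℚ ℂ (H →L[ℂ] H)
          rw [← Finset.insert_Icc_right_eq_Icc_add_one (by omega : (1:ℕ) ≤ m + 1),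
            Finset.sum_insert hnotmem, ← hB, ← hTm, smul_add,
            NormedSpace.exp_add_of_commute cBTm]
        simp only [ordProd]
        rw [ihm, hstep1, hSexp, hTexp]
        exact shuffle' _ _ _ _ _ _ (cBSm.exp) cBG (cLSm.exp)
  intro m hm1 hm2
  refine ⟨main m hm2, ?_⟩
  intro ψ hψ
  constructor <;>
  · apply exp_apply_eq_self'
    simp only [ContinuousLinearMap.smul_apply, ContinuousLinearMap.sum_apply]
    rw [Finset.sum_eq_zero, smul_zero]
    intro j hj
    simp only [Finset.mem_Icc] at hj
    rw [Finset.sum_eq_zero]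
    intro k hk
    first
      | (simp only [Finset.mem_Ico] at hk
         rw [hψ k (Finset.mem_Icc.mpr ⟨hk.1, by omega⟩), smul_zero])
      | (simp only [Finset.mem_Icc] at hk
         rw [hψ k (Finset.mem_Icc.mpr ⟨by omega, hk.2⟩), smul_zero])
end

section
/- Let d ≥ 1, let ψ ∈ ℂ^d, and let M_1, …, M_n ∈ M_d(ℂ) satisfy M_j ψ = ψ for all j. Let ψ_1, …, ψ_n ∈ ℂ^d satisfy M_j* ψ_j = ψ_j and ⟨ψ_j, ψ⟩ = 1 for all j. Set P_j = |ψ⟩⟨ψ_j| (the rank-one operator x ↦ ⟨ψ_j, x⟩ ψ), Q_j = I − P_j, and M_{Q_j} = Q_j M_j Q_j. Then M_1 M_2 ⋯ M_n = |ψ⟩⟨θ_n| + M_{Q_1} M_{Q_2} ⋯ M_{Q_n}, where θ_n = M_n* ⋯ M_2* ψ_1 = ψ_n + M_{Q_n}* ψ_{n−1} + M_{Q_n}* M_{Q_{n−1}}* ψ_{n−2} + ⋯ + M_{Q_n}* ⋯ M_{Q_2}* ψ_1, and moreover ⟨θ_n, ψ⟩ = 1. -/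
open scoped BigOperators Matrix

namespace ProdDecompAux

variable {d : ℕ}

abbrev Mt (d : ℕ) := Matrix (Fin d) (Fin d) ℂ
abbrev Vec (d : ℕ) := Fin d → ℂ

variable (ψ : Fin d → ℂ)

/-- rank one projector associated to a pair -/
noncomputable def pj (p : Mt d × Vec d) : Mt d := Matrix.vecMulVec ψ (star p.2)

noncomputable def mq (p : Mt d × Vec d) : Mt d := p.1 - pj ψ p

def Good (p : Mt d × Vec d) : Prop :=
  p.1.mulVec ψ = ψ ∧ p.1ᴴ.mulVec p.2 = p.2 ∧ star p.2 ⬝ᵥ ψ = 1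

lemma vecMulVec_mul (u v : Vec d) (A : Mt d) :
    Matrix.vecMulVec u v * A = Matrix.vecMulVec u (v ᵥ* A) := by
  ext i j
  simp [Matrix.mul_apply, Matrix.vecMulVec_apply, Matrix.vecMul, dotProduct,
    Finset.mul_sum, mul_assoc]

lemma mul_vecMulVec (A : Mt d) (u v : Vec d) :
    A * Matrix.vecMulVec u v = Matrix.vecMulVec (A.mulVec u) v := by
  ext i j
  simp only [Matrix.mul_apply, Matrix.vecMulVec_apply, Matrix.mulVec, dotProduct,
    Finset.sum_mul, mul_assoc]

lemma vecMulVec_mulVec (u v x : Vec d) :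
    (Matrix.vecMulVec u v).mulVec x = (v ⬝ᵥ x) • u := by
  ext i
  simp only [Matrix.mulVec, Matrix.vecMulVec_apply, dotProduct, Pi.smul_apply,
    smul_eq_mul, Finset.sum_mul]
  exact Finset.sum_congr rfl fun k _ => by ring

lemma vecMulVec_conjT (u v : Vec d) :
    (Matrix.vecMulVec u (star v))ᴴ = Matrix.vecMulVec v (star u) := by
  ext i j
  simp [Matrix.conjTranspose_apply, Matrix.vecMulVec_apply, mul_comm]

lemma zero_vecMulVec (v : Vec d) : Matrix.vecMulVec (0 : Vec d) v = 0 := by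
  ext i j; simp [Matrix.vecMulVec_apply]

lemma star_vecMul' (A : Mt d) (x : Vec d) : star x ᵥ* A = star (Aᴴ.mulVec x) := by
  rw [Matrix.star_mulVec, Matrix.conjTranspose_conjTranspose]

lemma star_dot (u w : Vec d) : star (star u ⬝ᵥ w) = star w ⬝ᵥ u := by
  simp [dotProduct, mul_comm]


variable {ψ}

lemma pj_mul (p : Mt d × Vec d) (hp : p.1ᴴ.mulVec p.2 = p.2) :
    pj ψ p * p.1 = pj ψ p := by
  rw [pj, vecMulVec_mul, star_vecMul', hp]

lemma mul_pj (A : Mt d) (hA : A.mulVec ψ = ψ) (p : Mt d × Vec d) :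
    A * pj ψ p = pj ψ p := by
  rw [pj, mul_vecMulVec, hA]

lemma pj_mulVec (p : Mt d × Vec d) (hp : star p.2 ⬝ᵥ ψ = 1) :
    (pj ψ p).mulVec ψ = ψ := by
  rw [pj, vecMulVec_mulVec, hp, one_smul]

lemma mq_eq (p : Mt d × Vec d) (hp : Good ψ p) :
    (1 - pj ψ p) * p.1 * (1 - pj ψ p) = mq ψ p := by
  obtain ⟨h1, h2, h3⟩ := hp
  have hPM : pj ψ p * p.1 = pj ψ p := pj_mul p h2
  have hMP : p.1 * pj ψ p = pj ψ p := mul_pj p.1 h1 p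
  have hPP : pj ψ p * pj ψ p = pj ψ p := by
    have h := mul_vecMulVec (pj ψ p) ψ (star p.2)
    rw [pj_mulVec p h3] at h
    exact h
  rw [mq, sub_mul, one_mul, hPM, mul_sub, mul_one, sub_mul, hMP, hPP]
  abel

lemma mq_mulVec_zero (p : Mt d × Vec d) (h1 : p.1.mulVec ψ = ψ) (h3 : star p.2 ⬝ᵥ ψ = 1) :
    (mq ψ p).mulVec ψ = 0 := by
  rw [mq, Matrix.sub_mulVec, h1, pj_mulVec p h3, sub_self]

lemma prod_fst_mulVec :
    ∀ (l : List (Mt d × Vec d)), (∀ p ∈ l, p.1.mulVec ψ = ψ) →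
      ((l.map Prod.fst).prod).mulVec ψ = ψ
  | [], _ => by simp
  | q :: l, h => by
    rw [List.map_cons, List.prod_cons, ← Matrix.mulVec_mulVec,
      prod_fst_mulVec l (fun p hp => h p (List.mem_cons_of_mem _ hp)),
      h q (List.mem_cons_self)]

lemma prod_mq_mulVec_zero :
    ∀ (l : List (Mt d × Vec d)) (h : Mt d × Vec d), (∀ q ∈ h :: l, Good ψ q) →
      (((h :: l).map (mq ψ)).prod).mulVec ψ = 0
  | [], h, hc => by
    obtain ⟨h1, _, h3⟩ := hc h (by simp)
    simp [mq_mulVec_zero h h1 h3]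
  | q :: l, h, hc => by
    rw [List.map_cons, List.prod_cons, ← Matrix.mulVec_mulVec,
      prod_mq_mulVec_zero l q (fun r hr => hc r (List.mem_cons_of_mem _ hr)),
      Matrix.mulVec_zero]

lemma theta_dot (l : List (Mt d × Vec d)) (v : Vec d)
    (hl : ∀ p ∈ l, p.1.mulVec ψ = ψ) :
    star ((((l.map Prod.fst).prod)ᴴ).mulVec v) ⬝ᵥ ψ = star v ⬝ᵥ ψ := by
  rw [← star_vecMul', ← Matrix.dotProduct_mulVec, prod_fst_mulVec l hl]


lemma mulVec_sum (A : Mt d) {ι : Type} (s : Finset ι) (f : ι → Vec d) :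
    A.mulVec (∑ i ∈ s, f i) = ∑ i ∈ s, A.mulVec (f i) := by
  ext j
  simp only [Matrix.mulVec, dotProduct, Finset.sum_apply, Finset.mul_sum]
  exact Finset.sum_comm

lemma claim1 (h : Mt d × Vec d) (l : List (Mt d × Vec d)) :
    (∀ p ∈ h :: l, Good ψ p) →
    ((h :: l).map Prod.fst).prod
      = Matrix.vecMulVec ψ (star ((((l.map Prod.fst).prod)ᴴ).mulVec h.2))
        + ((h :: l).map (mq ψ)).prod := by
  induction l using List.reverseRecOn with
  | nil =>
    intro hc
    simp only [List.map_cons, List.map_nil, List.prod_cons, List.prod_nil, mul_one,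
      Matrix.conjTranspose_one, Matrix.one_mulVec]
    simp only [mq, pj]
    abel
  | append_singleton l p ih =>
    intro hc
    have hc' : ∀ q ∈ h :: l, Good ψ q := by
      intro q hq
      apply hc
      rcases List.mem_cons.1 hq with hq | hq
      · exact hq ▸ List.mem_cons_self
      · exact List.mem_cons_of_mem _ (List.mem_append_left _ hq)
    have hT : ((h :: (l ++ [p])).map Prod.fst).prod
        = ((h :: l).map Prod.fst).prod * p.1 := by
      rw [← List.cons_append, List.map_append, List.prod_append]
      simp
    have hTm : ((h :: (l ++ [p])).map (mq ψ)).prod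
        = ((h :: l).map (mq ψ)).prod * mq ψ p := by
      rw [← List.cons_append, List.map_append, List.prod_append]
      simp
    rw [hT, ih hc', add_mul]
    congr 1
    · rw [vecMulVec_mul, star_vecMul', List.map_append, List.prod_append]
      congr 2
      simp [Matrix.conjTranspose_mul]
    · have hsplit : p.1 = mq ψ p + pj ψ p := by simp [mq]
      have hkill : (((h :: l).map (mq ψ)).prod).mulVec ψ = 0 :=
        prod_mq_mulVec_zero l h hc'
      rw [hsplit, mul_add, pj, mul_vecMulVec, hkill, zero_vecMulVec, add_zero, hTm]

lemma claim2 (h : Mt d × Vec d) (l : List (Mt d × Vec d)) :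
    (∀ p ∈ h :: l, Good ψ p) →
    (((l.map Prod.fst).prod)ᴴ).mulVec h.2
      = ∑ i : Fin (h :: l).length,
          ((((h :: l).map (mq ψ)).drop ((i : ℕ) + 1)).prod)ᴴ.mulVec (((h :: l).get i).2) := by
  induction l using List.reverseRecOn with
  | nil =>
    intro hc
    simp
  | append_singleton l p ih =>
    intro hc
    have hc' : ∀ q ∈ h :: l, Good ψ q := by
      intro q hq
      apply hc
      rcases List.mem_cons.1 hq with hq | hq
      · exact hq ▸ List.mem_cons_self
      · exact List.mem_cons_of_mem _ (List.mem_append_left _ hq)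
    obtain ⟨hp1, hp2, hp3⟩ := hc p (List.mem_cons_of_mem _ (by simp))
    -- LHS rewrite
    have hL : (((l ++ [p]).map Prod.fst).prod)ᴴ.mulVec h.2
        = (mq ψ p)ᴴ.mulVec ((((l.map Prod.fst).prod)ᴴ).mulVec h.2) + p.2 := by
      rw [List.map_append, List.prod_append]
      simp only [List.map_cons, List.map_nil, List.prod_cons, List.prod_nil, mul_one,
        Matrix.conjTranspose_mul, ← Matrix.mulVec_mulVec]
      have hsplit : p.1ᴴ = (mq ψ p)ᴴ + Matrix.vecMulVec p.2 (star ψ) := by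
        rw [← vecMulVec_conjT, ← Matrix.conjTranspose_add]
        congr 1
        simp [mq, pj]
      rw [hsplit, Matrix.add_mulVec, vecMulVec_mulVec]
      congr 1
      have hone : star ψ ⬝ᵥ (((l.map Prod.fst).prod)ᴴ).mulVec h.2 = 1 := by
        rw [← star_dot]
        have := theta_dot (ψ := ψ) l h.2 (fun q hq => (hc' q (List.mem_cons_of_mem _ hq)).1)
        rw [this, (hc h (List.mem_cons_self)).2.2]
        exact star_one ℂ
      rw [hone, one_smul]
    rw [hL, ih hc']
    -- RHS: split the last index
    have hlen : (h :: l).length = (l ++ [p]).length := by simp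
    rw [mulVec_sum]
    have hsplitsum :
        (∑ i : Fin (h :: (l ++ [p])).length,
          ((((h :: (l ++ [p])).map (mq ψ)).drop ((i : ℕ) + 1)).prod)ᴴ.mulVec
            (((h :: (l ++ [p])).get i).2))
        = (∑ i : Fin (l ++ [p]).length,
            ((((h :: (l ++ [p])).map (mq ψ)).drop ((i.castSucc : ℕ) + 1)).prod)ᴴ.mulVec
              (((h :: (l ++ [p])).get i.castSucc).2))
          + ((((h :: (l ++ [p])).map (mq ψ)).drop (((Fin.last (l ++ [p]).length) : ℕ) + 1)).prod)ᴴ.mulVec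
              (((h :: (l ++ [p])).get (Fin.last _)).2) := by
      exact Fin.sum_univ_castSucc _
    rw [hsplitsum]
    congr 1
    · -- main sum
      rw [← Fin.sum_congr' _ hlen]
      apply Finset.sum_congr rfl
      intro i _
      have hival : ((Fin.cast hlen i).castSucc : ℕ) = (i : ℕ) := rfl
      have hilt : (i : ℕ) < (h :: l).length := i.isLt
      have hile : (i : ℕ) + 1 ≤ ((h :: l).map (mq ψ)).length := by
        rw [List.length_map]
        exact Nat.succ_le_of_lt hilt
      have hdrop : ((h :: (l ++ [p])).map (mq ψ)).drop ((i : ℕ) + 1)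
          = (((h :: l).map (mq ψ)).drop ((i : ℕ) + 1)) ++ [mq ψ p] := by
        rw [← List.cons_append, List.map_append,
          List.drop_append_of_le_length hile]
        simp
      have hget : ((h :: (l ++ [p])).get ((Fin.cast hlen i).castSucc)).2
          = ((h :: l).get i).2 := by
        have hg : (h :: (l ++ [p])).get ((Fin.cast hlen i).castSucc)
            = (h :: l).get i := by
          rw [List.get_eq_getElem, List.get_eq_getElem]
          exact List.getElem_append_left hilt
        rw [hg]
      rw [hival, hdrop, hget, List.prod_append]
      simp [Matrix.conjTranspose_mul, ← Matrix.mulVec_mulVec]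
    · -- last term
      have : ((h :: (l ++ [p])).map (mq ψ)).drop (((Fin.last (l ++ [p]).length) : ℕ) + 1) = [] := by
        apply List.drop_eq_nil_of_le
        simp
      rw [this]
      have hgetlast : ((h :: (l ++ [p])).get (Fin.last _)) = p := by
        rw [List.get_eq_getElem]
        exact List.getElem_concat_length (l := h :: l) (a := p) (by simp) _
      rw [hgetlast]
      simp

end ProdDecompAux


/-- Decomposition of a product of matrices each fixing a common vector `ψ`:
`M_1 ⋯ M_n = |ψ⟩⟨θ_n| + M_{Q_1} ⋯ M_{Q_n}`, together with the two expressions for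
`θ_n` and the normalization `⟨θ_n, ψ⟩ = 1`. -/
theorem product_decomposition
    {d n : ℕ} (hd : 1 ≤ d) (hn : 1 ≤ n)
    (ψ : Fin d → ℂ)
    (M : Fin n → Matrix (Fin d) (Fin d) ℂ)
    (ψv : Fin n → (Fin d → ℂ))
    (hM : ∀ j, (M j).mulVec ψ = ψ)
    (hψv : ∀ j, (M j)ᴴ.mulVec (ψv j) = (ψv j))
    (hnorm : ∀ j, star (ψv j) ⬝ᵥ ψ = 1)
    (MQ : Fin n → Matrix (Fin d) (Fin d) ℂ)
    (hMQ : ∀ j, MQ j = (1 - Matrix.vecMulVec ψ (star (ψv j))) * M j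
        * (1 - Matrix.vecMulVec ψ (star (ψv j))))
    (θ : Fin d → ℂ)
    (hθ : θ = (((List.ofFn M).drop 1).prod)ᴴ.mulVec (ψv ⟨0, hn⟩)) :
    (List.ofFn M).prod = Matrix.vecMulVec ψ (star θ) + (List.ofFn MQ).prod
    ∧ θ = ∑ i : Fin n, (((List.ofFn MQ).drop (i + 1)).prod)ᴴ.mulVec (ψv i)
    ∧ star θ ⬝ᵥ ψ = 1 := by
  obtain ⟨m, rfl⟩ : ∃ m, n = m + 1 := ⟨n - 1, (Nat.succ_pred_eq_of_pos hn).symm⟩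
  have hMQ' : ∀ j, MQ j = ProdDecompAux.mq ψ (M j, ψv j) := by
    intro j
    rw [hMQ j, ← ProdDecompAux.mq_eq (M j, ψv j) ⟨hM j, hψv j, hnorm j⟩]
    rfl
  set h₀ : ProdDecompAux.Mt d × ProdDecompAux.Vec d := (M 0, ψv 0) with hh₀
  set l₀ : List (ProdDecompAux.Mt d × ProdDecompAux.Vec d) :=
    List.ofFn (fun i : Fin m => (M i.succ, ψv i.succ)) with hl₀
  have hL : (List.ofFn fun j : Fin (m+1) => (M j, ψv j)) = h₀ :: l₀ := by
    rw [List.ofFn_succ]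
  have hGood : ∀ p ∈ h₀ :: l₀, ProdDecompAux.Good ψ p := by
    intro p hp
    rw [← hL, List.mem_ofFn] at hp
    obtain ⟨j, rfl⟩ := hp
    exact ⟨hM j, hψv j, hnorm j⟩
  have hmapfst : (h₀ :: l₀).map Prod.fst = List.ofFn M := by
    rw [← hL, List.map_ofFn]; rfl
  have hmapmq : (h₀ :: l₀).map (ProdDecompAux.mq ψ) = List.ofFn MQ := by
    rw [← hL, List.map_ofFn]
    exact congrArg List.ofFn (funext fun j => (hMQ' j).symm)
  have hθ' : θ = (((l₀.map Prod.fst).prod)ᴴ).mulVec h₀.2 := by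
    have e1 : (List.ofFn M).drop 1 = l₀.map Prod.fst := by
      rw [List.ofFn_succ, hl₀, List.map_ofFn]; rfl
    have e2 : ψv ⟨0, hn⟩ = h₀.2 := by
      rw [hh₀]
      exact congrArg ψv (Fin.ext (by simp))
    rw [hθ, e1, e2]
  refine ⟨?_, ?_, ?_⟩
  · have h1 := ProdDecompAux.claim1 h₀ l₀ hGood
    rw [hmapfst, hmapmq, ← hθ'] at h1
    exact h1
  · have h2 := ProdDecompAux.claim2 h₀ l₀ hGood
    rw [← hθ', hmapmq] at h2
    have hlen : m + 1 = (h₀ :: l₀).length := by simp [hl₀]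
    rw [h2, ← Fin.sum_congr' _ hlen]
    apply Finset.sum_congr rfl
    intro i _
    have hival : ((Fin.cast hlen i : Fin (h₀ :: l₀).length) : ℕ) = (i : ℕ) := rfl
    have hget : ((h₀ :: l₀).get (Fin.cast hlen i)).2 = ψv i := by
      have hg : (h₀ :: l₀).get (Fin.cast hlen i)
          = (fun j : Fin (m+1) => (M j, ψv j)) ⟨(i : ℕ), i.isLt⟩ := by
        rw [List.get_eq_getElem]
        have := List.getElem_of_eq hL.symm
          (show ((Fin.cast hlen i : Fin (h₀ :: l₀).length) : ℕ)
            < (h₀ :: l₀).length from (Fin.cast hlen i).isLt)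
        rw [this, List.getElem_ofFn]
        rfl
      rw [hg]
    rw [hival, hget]
  · have h3 := ProdDecompAux.theta_dot (ψ := ψ) l₀ h₀.2
      (fun q hq => (hGood q (List.mem_cons_of_mem _ hq)).1)
    rw [← hθ'] at h3
    rw [h3, hh₀]
    exact hnorm 0
end

section
/- Let d ≥ 1, let ν be a norm on ℂ^d and let ψ ∈ ℂ^d be a unit vector (Euclidean norm 1). Then there exists a constant C₀ > 0, depending only on d, ν and ψ, with the following properties. For any matrix M ∈ M_d(ℂ) with Mψ = ψ and ν(Mx) ≤ ν(x) for all x ∈ ℂ^d, one has the direct sum decomposition ℂ^d = ker(I − M) ⊕ ran(I − M); let P_{1,M} denote the projection onto ker(I − M) along ran(I − M), and set ψ_M = (P_{1,M})* ψ, Q_M = I − |ψ⟩⟨ψ_M| and M_Q = Q_M M Q_M. Then: (1) ‖ψ_M‖ ≤ C₀ (Euclidean norm) and ‖Q_M‖ ≤ 1 + C₀ (operator norm); (2) for any finite sequence M^{(1)}, …, M^{(n)} of matrices each satisfying the above two hypotheses, ‖M^{(n)}_Q M^{(n−1)}_Q ⋯ M^{(1)}_Q‖ ≤ C₀(1 +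 C₀); (3) for any such sequence, ‖(M^{(n)})* ⋯ (M^{(2)})* ψ_{M^{(1)}}‖ ≤ C₀². -/
open scoped BigOperators Matrix

/-- The Euclidean norm of a vector in `ℂ^d`. -/
noncomputable def euclNorm {d : ℕ} (x : Fin d → ℂ) : ℝ :=
  ‖(WithLp.equiv 2 (Fin d → ℂ)).symm x‖

/-- The operator norm (w.r.t. the Euclidean norm) of a `d × d` complex matrix. -/
noncomputable def opNorm {d : ℕ} (A : Matrix (Fin d) (Fin d) ℂ) : ℝ :=
  ‖LinearMap.toContinuousLinearMap (Matrix.toEuclideanLin A)‖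

/-- `A` is a reduced dynamics operator relative to `(ψ, ν)`: it fixes `ψ` and is a
contraction for the norm `ν`. -/
def IsRDO {d : ℕ} (ν : (Fin d → ℂ) → ℝ) (ψ : Fin d → ℂ)
    (A : Matrix (Fin d) (Fin d) ℂ) : Prop :=
  A.mulVec ψ = ψ ∧ ∀ x, ν (A.mulVec x) ≤ ν x

/-- `P` is the projection onto `ker (I - A)` along `ran (I - A)`. -/
def ProjSpec {d : ℕ} (A P : Matrix (Fin d) (Fin d) ℂ) : Prop :=
  (∀ x, A.mulVec x = x → P.mulVec x = x) ∧ ∀ x, P.mulVec (x - A.mulVec x) = 0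

namespace RDOaux

variable {d : ℕ}

lemma en_nonneg (x : Fin d → ℂ) : 0 ≤ euclNorm x := norm_nonneg _

lemma en_zero : euclNorm (0 : Fin d → ℂ) = 0 := by
  simp [euclNorm, WithLp.equiv_symm_apply]

lemma en_eq_zero {x : Fin d → ℂ} : euclNorm x = 0 ↔ x = 0 := by
  rw [euclNorm, norm_eq_zero]
  exact ⟨fun h => by simpa using congrArg (WithLp.equiv 2 (Fin d → ℂ)) h,
    fun h => by simp [h, WithLp.equiv_symm_apply]⟩

lemma en_add (x y : Fin d → ℂ) : euclNorm (x + y) ≤ euclNorm x + euclNorm y := by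
  rw [euclNorm, WithLp.equiv_symm_apply, WithLp.toLp_add]; exact norm_add_le _ _

lemma en_smul (c : ℂ) (x : Fin d → ℂ) : euclNorm (c • x) = ‖c‖ * euclNorm x := by
  rw [euclNorm, WithLp.equiv_symm_apply, WithLp.toLp_smul]; exact norm_smul _ _

lemma en_sub (x y : Fin d → ℂ) : euclNorm (x - y) ≤ euclNorm x + euclNorm y := by
  rw [euclNorm, WithLp.equiv_symm_apply, WithLp.toLp_sub]; exact norm_sub_le _ _

lemma en_sum {s : Finset ℕ} (f : ℕ → Fin d → ℂ) :
    euclNorm (∑ k ∈ s, f k) ≤ ∑ k ∈ s, euclNorm (f k) := by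
  classical
  induction s using Finset.induction with
  | empty => simp [en_zero]
  | insert _ _ h ih =>
      rw [Finset.sum_insert h, Finset.sum_insert h]
      exact le_trans (en_add _ _) (by linarith)

lemma mulVec_en_le (A : Matrix (Fin d) (Fin d) ℂ) (x : Fin d → ℂ) :
    euclNorm (A.mulVec x) ≤ opNorm A * euclNorm x := by
  have h1 := (LinearMap.toContinuousLinearMap (Matrix.toEuclideanLin A)).le_opNorm
    ((WithLp.equiv 2 (Fin d → ℂ)).symm x)
  have h2 : (LinearMap.toContinuousLinearMap (Matrix.toEuclideanLin A))
      ((WithLp.equiv 2 (Fin d → ℂ)).symm x) = (WithLp.equiv 2 (Fin d → ℂ)).symm (A.mulVec x) := rfl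
  rw [h2] at h1
  rw [euclNorm, euclNorm, opNorm]
  exact h1

lemma opNorm_le (A : Matrix (Fin d) (Fin d) ℂ) {C : ℝ} (hC : 0 ≤ C)
    (h : ∀ x, euclNorm (A.mulVec x) ≤ C * euclNorm x) : opNorm A ≤ C := by
  rw [opNorm]
  refine ContinuousLinearMap.opNorm_le_bound _ hC fun x => ?_
  simpa [euclNorm, opNorm, Matrix.toEuclideanLin_apply] using h ((WithLp.equiv 2 (Fin d → ℂ)) x)

lemma opNorm_conjTranspose (A : Matrix (Fin d) (Fin d) ℂ) : opNorm Aᴴ = opNorm A := by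
  rw [opNorm, opNorm, Matrix.toEuclideanLin_conjTranspose_eq_adjoint,
    LinearMap.adjoint_toContinuousLinearMap]
  exact ContinuousLinearMap.adjoint.norm_map _

lemma opNorm_one_le : opNorm (1 : Matrix (Fin d) (Fin d) ℂ) ≤ 1 := by
  apply opNorm_le _ zero_le_one
  intro x; simp [Matrix.one_mulVec]

lemma opNorm_nonneg (A : Matrix (Fin d) (Fin d) ℂ) : 0 ≤ opNorm A := norm_nonneg _


lemma coord_le (x : Fin d → ℂ) (i : Fin d) : ‖x i‖ ≤ euclNorm x := by
  rw [euclNorm, EuclideanSpace.norm_eq]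
  have h1 : ‖x i‖ ^ 2 ≤ ∑ j, ‖((WithLp.equiv 2 (Fin d → ℂ)).symm x) j‖ ^ 2 := by
    refine Finset.single_le_sum (f := fun j => ‖x j‖ ^ 2) (fun j _ => by positivity)
      (Finset.mem_univ i)
  calc ‖x i‖ = Real.sqrt (‖x i‖ ^ 2) := by rw [Real.sqrt_sq (norm_nonneg _)]
  _ ≤ _ := Real.sqrt_le_sqrt h1

section nu
variable (ν : (Fin d → ℂ) → ℝ)
    (hν0 : ∀ x, ν x = 0 ↔ x = 0)
    (hνsmul : ∀ (c : ℂ) (x : Fin d → ℂ), ν (c • x) = ‖c‖ * ν x)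
    (hνadd : ∀ x y : Fin d → ℂ, ν (x + y) ≤ ν x + ν y)

include hν0 hνsmul hνadd

omit hν0 hνadd in
lemma nu_zero : ν 0 = 0 := by
  have := hνsmul 0 0; simpa using this

omit hν0 in
lemma nu_nonneg (x : Fin d → ℂ) : 0 ≤ ν x := by
  have h := hνadd x (-x)
  have h2 : ν (-x) = ν x := by
    have := hνsmul (-1) x; simpa using this
  have h0 : ν 0 = 0 := nu_zero ν hνsmul
  rw [add_neg_cancel, h0, h2] at h
  linarith

omit hν0 in
lemma nu_sum {s : Finset (Fin d)} (f : Fin d → (Fin d → ℂ)) :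
    ν (∑ k ∈ s, f k) ≤ ∑ k ∈ s, ν (f k) := by
  classical
  induction s using Finset.induction with
  | empty => simp [nu_zero ν hνsmul]
  | insert _ _ h ih =>
      rw [Finset.sum_insert h, Finset.sum_insert h]
      exact le_trans (hνadd _ _) (by linarith)

omit hν0 in
lemma nu_upper : ∀ x, ν x ≤ (∑ i, ν (Pi.single i 1)) * euclNorm x := by
  intro x
  have hx : x = ∑ i, x i • (Pi.single i 1 : Fin d → ℂ) := by
    funext j
    simp [Finset.sum_apply, Pi.single_apply]
  calc ν x = ν (∑ i, x i • (Pi.single i 1 : Fin d → ℂ)) := by rw [← hx]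
  _ ≤ ∑ i, ν (x i • (Pi.single i 1 : Fin d → ℂ)) := nu_sum ν hνsmul hνadd _
  _ = ∑ i, ‖x i‖ * ν (Pi.single i 1 : Fin d → ℂ) := by simp [hνsmul]
  _ ≤ ∑ i, euclNorm x * ν (Pi.single i 1 : Fin d → ℂ) := by
      refine Finset.sum_le_sum fun i _ => ?_
      exact mul_le_mul_of_nonneg_right (coord_le x i) (nu_nonneg ν hνsmul hνadd _)
  _ = (∑ i, ν (Pi.single i 1)) * euclNorm x := by
      rw [Finset.sum_mul]
      exact Finset.sum_congr rfl fun i _ => mul_comm _ _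

omit hν0 in
lemma nu_lipschitz {c₂ : ℝ} (hc₂ : ∀ x, ν x ≤ c₂ * euclNorm x) :
    Continuous (fun x : EuclideanSpace ℂ (Fin d) => ν ((WithLp.equiv 2 (Fin d → ℂ)) x)) := by
  set e := WithLp.equiv 2 (Fin d → ℂ)
  have hneg : ∀ z : Fin d → ℂ, ν (-z) = ν z := fun z => by
    have := hνsmul (-1) z; simpa using this
  refine (LipschitzWith.of_dist_le_mul (K := Real.toNNReal c₂)
    (f := fun x : EuclideanSpace ℂ (Fin d) => ν (e x)) ?_).continuous
  intro x y
  have h1 : ν (e x) - ν (e y) ≤ ν (e x - e y) := by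
    have := hνadd (e x - e y) (e y); rw [sub_add_cancel] at this; linarith
  have h1' : ν (e y) - ν (e x) ≤ ν (e x - e y) := by
    have := hνadd (e y - e x) (e x); rw [sub_add_cancel] at this
    have h5 : ν (e y - e x) = ν (e x - e y) := by
      rw [← hneg (e y - e x)]; congr 1; abel
    linarith
  have h2 : ν (e x - e y) ≤ c₂ * dist x y := by
    have h3 := hc₂ (e x - e y)
    have h4 : euclNorm (e x - e y) = dist x y := by rw [euclNorm, dist_eq_norm]; rfl
    rw [h4] at h3; exact h3
  have h6 : c₂ * dist x y ≤ Real.toNNReal c₂ * dist x y :=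
    mul_le_mul_of_nonneg_right (Real.le_coe_toNNReal c₂) dist_nonneg
  rw [Real.dist_eq, abs_sub_le_iff]
  exact ⟨by linarith, by linarith⟩



omit hνsmul hνadd in
lemma nu_pos_of_ne (x : Fin d → ℂ) (hx : x ≠ 0) (h0 : 0 ≤ ν x) : 0 < ν x := by
  rcases lt_or_eq_of_le h0 with h | h
  · exact h
  · exact absurd ((hν0 x).mp h.symm) hx

lemma nu_lower (ψ : Fin d → ℂ) (hψ : euclNorm ψ = 1) :
    ∃ c₁ > 0, ∀ x, c₁ * euclNorm x ≤ ν x := by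
  classical
  set e := WithLp.equiv 2 (Fin d → ℂ) with he
  have hc₂ := nu_upper ν hνsmul hνadd
  have hcont := nu_lipschitz ν hνsmul hνadd hc₂
  have hψmem : e.symm ψ ∈ Metric.sphere (0 : EuclideanSpace ℂ (Fin d)) 1 := by
    rw [mem_sphere_zero_iff_norm]; exact hψ
  obtain ⟨z, hz, hmin⟩ := (isCompact_sphere (0 : EuclideanSpace ℂ (Fin d)) 1).exists_isMinOn
    ⟨e.symm ψ, hψmem⟩ hcont.continuousOn
  have hz1 : ‖z‖ = 1 := mem_sphere_zero_iff_norm.mp hz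
  have hzne : e z ≠ 0 := by
    intro h
    have : z = 0 := by
      have := congrArg e.symm h
      simpa [e] using this
    rw [this] at hz1; simp at hz1
  have hc₁pos : 0 < ν (e z) :=
    nu_pos_of_ne ν hν0 _ hzne (nu_nonneg ν hνsmul hνadd _)
  refine ⟨ν (e z), hc₁pos, fun x => ?_⟩
  by_cases hx : x = 0
  · subst hx; rw [en_zero]
    simp [nu_zero ν hνsmul]
  · set r := euclNorm x with hr
    have hrpos : 0 < r := by
      rcases lt_or_eq_of_le (en_nonneg x) with h | h
      · exact h
      · exact absurd (en_eq_zero.mp h.symm) hx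
    set u := ((r : ℂ)⁻¹) • x with hu
    have hun : euclNorm u = 1 := by
      rw [hu, en_smul]
      have : ‖((r:ℂ))⁻¹‖ = r⁻¹ := by
        rw [norm_inv, Complex.norm_real, Real.norm_eq_abs, abs_of_pos hrpos]
      rw [this, ← hr, inv_mul_cancel₀ (ne_of_gt hrpos)]
    have humem : e.symm u ∈ Metric.sphere (0 : EuclideanSpace ℂ (Fin d)) 1 := by
      rw [mem_sphere_zero_iff_norm]; exact hun
    have hminu : ν (e z) ≤ ν u := by
      have := isMinOn_iff.mp hmin _ humem
      simpa [e] using this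
    have hxu : x = (r : ℂ) • u := by
      rw [hu, smul_smul, mul_inv_cancel₀ (by exact_mod_cast ne_of_gt hrpos), one_smul]
    have : ν x = r * ν u := by
      rw [hxu, hνsmul]
      congr 1
      rw [Complex.norm_real, Real.norm_eq_abs, abs_of_pos hrpos]
    rw [this]
    calc ν (e z) * r ≤ ν u * r := mul_le_mul_of_nonneg_right hminu (le_of_lt hrpos)
    _ = r * ν u := mul_comm _ _

lemma exists_contraction_bound (ψ : Fin d → ℂ) (hψ : euclNorm ψ = 1) :
    ∃ C : ℝ, 1 ≤ C ∧ ∀ A : Matrix (Fin d) (Fin d) ℂ,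
      (∀ x, ν (A.mulVec x) ≤ ν x) → opNorm A ≤ C := by
  obtain ⟨c₁, hc₁, hlow⟩ := nu_lower ν hν0 hνsmul hνadd ψ hψ
  set c₂ := ∑ i, ν (Pi.single i 1) with hc₂def
  have hup := nu_upper ν hνsmul hνadd
  refine ⟨max 1 (c₂ / c₁), le_max_left _ _, fun A hA => ?_⟩
  refine opNorm_le A (le_trans zero_le_one (le_max_left _ _)) fun x => ?_
  have h1 : c₁ * euclNorm (A.mulVec x) ≤ ν (A.mulVec x) := hlow _
  have h2 : ν (A.mulVec x) ≤ ν x := hA x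
  have h3 : ν x ≤ c₂ * euclNorm x := hup x
  have h4 : euclNorm (A.mulVec x) ≤ (c₂ / c₁) * euclNorm x := by
    rw [div_mul_eq_mul_div, le_div_iff₀ hc₁]
    nlinarith [en_nonneg (A.mulVec x)]
  exact le_trans h4 (mul_le_mul_of_nonneg_right (le_max_right _ _) (en_nonneg x))

end nu

-- Block C : matrix identities
lemma mat_ext_of_mulVec {A B : Matrix (Fin d) (Fin d) ℂ}
    (h : ∀ x, A.mulVec x = B.mulVec x) : A = B := by
  ext i j
  have := congrFun (h (Pi.single j 1)) i
  simpa [Matrix.mulVec_single] using this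

lemma vecMulVec_mulVec (u v x : Fin d → ℂ) :
    (Matrix.vecMulVec u v).mulVec x = (dotProduct v x) • u := by
  funext i
  simp only [Matrix.mulVec, Matrix.vecMulVec_apply, dotProduct, Pi.smul_apply,
    smul_eq_mul, Finset.sum_mul]
  exact Finset.sum_congr rfl fun j _ => by ring

lemma mul_vecMulVec (M : Matrix (Fin d) (Fin d) ℂ) (u v : Fin d → ℂ) :
    M * Matrix.vecMulVec u v = Matrix.vecMulVec (M.mulVec u) v := by
  ext i j
  simp [Matrix.mul_apply, Matrix.vecMulVec_apply, Matrix.mulVec, dotProduct,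
    Finset.sum_mul, mul_assoc]

lemma vecMulVec_mul (M : Matrix (Fin d) (Fin d) ℂ) (u v : Fin d → ℂ) :
    Matrix.vecMulVec u v * M = Matrix.vecMulVec u (Matrix.vecMul v M) := by
  ext i j
  simp [Matrix.mul_apply, Matrix.vecMulVec_apply, Matrix.vecMul, dotProduct,
    Finset.mul_sum, mul_assoc]

lemma vecMulVec_zero_left (v : Fin d → ℂ) :
    Matrix.vecMulVec (0 : Fin d → ℂ) v = 0 := by
  ext i j; simp [Matrix.vecMulVec_apply]

lemma dot_star_eq_inner (w x : Fin d → ℂ) :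
    dotProduct (star w) x
      = (inner ℂ ((WithLp.equiv 2 (Fin d → ℂ)).symm w) ((WithLp.equiv 2 (Fin d → ℂ)).symm x) : ℂ) := by
  rw [WithLp.equiv_symm_apply, EuclideanSpace.inner_toLp_toLp, dotProduct_comm]

lemma dot_star_self (ψ : Fin d → ℂ) (hψ : euclNorm ψ = 1) :
    dotProduct (star ψ) ψ = 1 := by
  rw [dot_star_eq_inner]
  rw [@inner_self_eq_norm_sq_to_K ℂ]
  rw [show ‖(WithLp.equiv 2 (Fin d → ℂ)).symm ψ‖ = euclNorm ψ from rfl, hψ]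
  norm_num

lemma abs_dot_star_le (w x : Fin d → ℂ) :
    ‖dotProduct (star w) x‖ ≤ euclNorm w * euclNorm x := by
  rw [dot_star_eq_inner]
  exact norm_inner_le_norm _ _

lemma opNorm_vecMulVec_le (u w : Fin d → ℂ) :
    opNorm (Matrix.vecMulVec u (star w)) ≤ euclNorm u * euclNorm w := by
  refine opNorm_le _ (mul_nonneg (en_nonneg u) (en_nonneg w)) fun x => ?_
  rw [vecMulVec_mulVec, en_smul]
  calc ‖dotProduct (star w) x‖ * euclNorm u
      ≤ (euclNorm w * euclNorm x) * euclNorm u :=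
        mul_le_mul_of_nonneg_right (abs_dot_star_le w x) (en_nonneg u)
  _ = euclNorm u * euclNorm w * euclNorm x := by ring

lemma opNorm_mul_le (A B : Matrix (Fin d) (Fin d) ℂ) :
    opNorm (A * B) ≤ opNorm A * opNorm B := by
  refine opNorm_le _ (mul_nonneg (opNorm_nonneg A) (opNorm_nonneg B)) fun x => ?_
  rw [← Matrix.mulVec_mulVec]
  calc euclNorm (A.mulVec (B.mulVec x)) ≤ opNorm A * euclNorm (B.mulVec x) := mulVec_en_le _ _
  _ ≤ opNorm A * (opNorm B * euclNorm x) :=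
      mul_le_mul_of_nonneg_left (mulVec_en_le _ _) (opNorm_nonneg A)
  _ = opNorm A * opNorm B * euclNorm x := by ring

lemma opNorm_sub_le (A B : Matrix (Fin d) (Fin d) ℂ) :
    opNorm (A - B) ≤ opNorm A + opNorm B := by
  refine opNorm_le _ (add_nonneg (opNorm_nonneg A) (opNorm_nonneg B)) fun x => ?_
  rw [Matrix.sub_mulVec]
  calc euclNorm (A.mulVec x - B.mulVec x) ≤ euclNorm (A.mulVec x) + euclNorm (B.mulVec x) :=
        en_sub _ _
  _ ≤ opNorm A * euclNorm x + opNorm B * euclNorm x :=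
      add_le_add (mulVec_en_le _ _) (mulVec_en_le _ _)
  _ = (opNorm A + opNorm B) * euclNorm x := by ring

-- Block D : fixed points, powers, lists
lemma pow_mulVec_fix {M : Matrix (Fin d) (Fin d) ℂ} {x : Fin d → ℂ}
    (h : M.mulVec x = x) : ∀ k : ℕ, (M ^ k).mulVec x = x := by
  intro k
  induction k with
  | zero => simp [Matrix.one_mulVec]
  | succ k ih => rw [pow_succ, ← Matrix.mulVec_mulVec, h, ih]

lemma list_prod_fix {ψ : Fin d → ℂ} (l : List (Matrix (Fin d) (Fin d) ℂ))
    (h : ∀ A ∈ l, A.mulVec ψ = ψ) : l.prod.mulVec ψ = ψ := by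
  induction l with
  | nil => simp [Matrix.one_mulVec]
  | cons A l ih =>
      rw [List.prod_cons, ← Matrix.mulVec_mulVec, ih (fun B hB => h B (List.mem_cons_of_mem _ hB)),
        h A (List.mem_cons_self)]

lemma list_prod_contr (ν : (Fin d → ℂ) → ℝ) (l : List (Matrix (Fin d) (Fin d) ℂ))
    (h : ∀ A ∈ l, ∀ x, ν (A.mulVec x) ≤ ν x) : ∀ x, ν (l.prod.mulVec x) ≤ ν x := by
  induction l with
  | nil => intro x; simp [Matrix.one_mulVec]
  | cons A l ih =>
      intro x
      rw [List.prod_cons, ← Matrix.mulVec_mulVec]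
      exact le_trans (h A (List.mem_cons_self) _)
        (ih (fun B hB => h B (List.mem_cons_of_mem _ hB)) x)

lemma en_nsmul (N : ℕ) (x : Fin d → ℂ) : euclNorm ((N : ℂ) • x) = N * euclNorm x := by
  rw [en_smul]; norm_num

-- helper: a ≤ b + c / N for all N ≥ 1 implies a ≤ b
lemma le_of_forall_div {a b c : ℝ} (hc : 0 ≤ c) (h : ∀ N : ℕ, 1 ≤ N → a ≤ b + c / N) : a ≤ b := by
  by_contra hab
  push_neg at hab
  obtain ⟨N, hN⟩ := exists_nat_gt (max 1 (c / (a - b)))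
  have hN1 : 1 ≤ N := by
    have := lt_of_le_of_lt (le_max_left 1 (c / (a-b))) hN
    exact_mod_cast this.le
  have hNpos : (0:ℝ) < N := by positivity
  have h2 : c / (a - b) < N := lt_of_le_of_lt (le_max_right _ _) hN
  have h3 : c / N < a - b := by
    rw [div_lt_iff₀ hNpos]
    rw [div_lt_iff₀ (by linarith)] at h2
    linarith [mul_comm (a-b) (N:ℝ)]
  have := h N hN1
  linarith

-- Block E : kernel/range complementarity and projection bound
lemma ker_mem_iff {M : Matrix (Fin d) (Fin d) ℂ} {x : Fin d → ℂ} :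
    x ∈ LinearMap.ker (Matrix.mulVecLin (1 - M)) ↔ M.mulVec x = x := by
  rw [LinearMap.mem_ker, Matrix.mulVecLin_apply, Matrix.sub_mulVec, Matrix.one_mulVec,
    sub_eq_zero]
  exact ⟨fun h => h.symm, fun h => h.symm⟩

lemma range_mem_iff {M : Matrix (Fin d) (Fin d) ℂ} {v : Fin d → ℂ} :
    v ∈ LinearMap.range (Matrix.mulVecLin (1 - M)) ↔ ∃ y, y - M.mulVec y = v := by
  constructor
  · rintro ⟨y, hy⟩
    exact ⟨y, by rw [← hy, Matrix.mulVecLin_apply, Matrix.sub_mulVec, Matrix.one_mulVec]⟩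
  · rintro ⟨y, hy⟩
    exact ⟨y, by rw [Matrix.mulVecLin_apply, Matrix.sub_mulVec, Matrix.one_mulVec, hy]⟩

lemma ker_range_disjoint {M : Matrix (Fin d) (Fin d) ℂ} {C : ℝ} (hC0 : 0 ≤ C)
    (hpow : ∀ k : ℕ, opNorm (M ^ k) ≤ C) :
    Disjoint (LinearMap.ker (Matrix.mulVecLin (1 - M)))
      (LinearMap.range (Matrix.mulVecLin (1 - M))) := by
  rw [Submodule.disjoint_def]
  intro x hxk hxr
  obtain ⟨y, hy⟩ := range_mem_iff.mp hxr
  have hMx : M.mulVec x = x := ker_mem_iff.mp hxk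
  have claim : ∀ N : ℕ, (N : ℂ) • x = y - (M ^ N).mulVec y := by
    intro N
    induction N with
    | zero => simp [Matrix.one_mulVec]
    | succ N ih =>
        have h1 : (M ^ N).mulVec x = x := pow_mulVec_fix hMx N
        have h2 : (M ^ (N + 1)).mulVec y = (M ^ N).mulVec (M.mulVec y) := by
          rw [Matrix.mulVec_mulVec, ← pow_succ]
        push_cast
        rw [add_smul, one_smul, ih, h2]
        have h3 : x = (M ^ N).mulVec y - (M ^ N).mulVec (M.mulVec y) := by
          rw [← Matrix.mulVec_sub, hy, h1]
        rw [h3]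
        abel
  have hen : ∀ N : ℕ, 1 ≤ N → euclNorm x ≤ 0 + ((1 + C) * euclNorm y) / N := by
    intro N hN
    have hNpos : (0:ℝ) < N := by exact_mod_cast hN
    have h4 : (N:ℝ) * euclNorm x ≤ (1 + C) * euclNorm y := by
      rw [← en_nsmul, claim N]
      calc euclNorm (y - (M ^ N).mulVec y) ≤ euclNorm y + euclNorm ((M ^ N).mulVec y) :=
            en_sub _ _
      _ ≤ euclNorm y + C * euclNorm y :=
          add_le_add_right (le_trans (mulVec_en_le _ _)
            (mul_le_mul_of_nonneg_right (hpow N) (en_nonneg y))) _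
      _ = (1 + C) * euclNorm y := by ring
    rw [zero_add, le_div_iff₀ hNpos]
    calc euclNorm x * N = N * euclNorm x := mul_comm _ _
    _ ≤ _ := h4
  have := le_of_forall_div (c := (1 + C) * euclNorm y)
    (mul_nonneg (by linarith) (en_nonneg y)) hen
  exact en_eq_zero.mp (le_antisymm this (en_nonneg x))

lemma ker_range_codisjoint {M : Matrix (Fin d) (Fin d) ℂ}
    (hdis : Disjoint (LinearMap.ker (Matrix.mulVecLin (1 - M)))
      (LinearMap.range (Matrix.mulVecLin (1 - M)))) :
    Codisjoint (LinearMap.ker (Matrix.mulVecLin (1 - M)))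
      (LinearMap.range (Matrix.mulVecLin (1 - M))) := by
  rw [codisjoint_iff]
  set f := Matrix.mulVecLin (1 - M)
  have h1 := LinearMap.finrank_range_add_finrank_ker f
  have h2 := Submodule.finrank_sup_add_finrank_inf_eq (LinearMap.ker f) (LinearMap.range f)
  rw [disjoint_iff.mp hdis, finrank_bot] at h2
  apply Submodule.eq_top_of_finrank_eq
  omega

lemma compl_decomp {M : Matrix (Fin d) (Fin d) ℂ}
    (hco : Codisjoint (LinearMap.ker (Matrix.mulVecLin (1 - M)))
      (LinearMap.range (Matrix.mulVecLin (1 - M)))) (x : Fin d → ℂ) :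
    ∃ u y, M.mulVec u = u ∧ x = u + (y - M.mulVec y) := by
  have hx : x ∈ LinearMap.ker (Matrix.mulVecLin (1 - M)) ⊔
      LinearMap.range (Matrix.mulVecLin (1 - M)) := by
    rw [codisjoint_iff.mp hco]; trivial
  obtain ⟨u, hu, v, hv, huv⟩ := Submodule.mem_sup.mp hx
  obtain ⟨y, hy⟩ := range_mem_iff.mp hv
  exact ⟨u, y, ker_mem_iff.mp hu, by rw [hy, huv]⟩

lemma proj_en_le {M P : Matrix (Fin d) (Fin d) ℂ} {C : ℝ} (hC1 : 1 ≤ C)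
    (hpow : ∀ k : ℕ, opNorm (M ^ k) ≤ C)
    (hP1 : ∀ x, M.mulVec x = x → P.mulVec x = x)
    (hP2 : ∀ x, P.mulVec (x - M.mulVec x) = 0)
    (hco : Codisjoint (LinearMap.ker (Matrix.mulVecLin (1 - M)))
      (LinearMap.range (Matrix.mulVecLin (1 - M)))) :
    ∀ x, euclNorm (P.mulVec x) ≤ C * euclNorm x := by
  intro x
  obtain ⟨u, y, hu, hxu⟩ := compl_decomp hco x
  have hPx : P.mulVec x = u := by
    rw [hxu, Matrix.mulVec_add, hP1 u hu, hP2 y, add_zero]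
  rw [hPx]
  have claim : ∀ N : ℕ, (N : ℂ) • u + (y - (M ^ N).mulVec y)
      = ∑ k ∈ Finset.range N, (M ^ k).mulVec x := by
    intro N
    induction N with
    | zero => simp [Matrix.one_mulVec]
    | succ N ih =>
        rw [Finset.sum_range_succ, ← ih]
        have h1 : (M ^ N).mulVec x = u + ((M ^ N).mulVec y - (M ^ N).mulVec (M.mulVec y)) := by
          rw [hxu, Matrix.mulVec_add, Matrix.mulVec_sub, pow_mulVec_fix hu N]
        have h2 : (M ^ (N + 1)).mulVec y = (M ^ N).mulVec (M.mulVec y) := by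
          rw [Matrix.mulVec_mulVec, ← pow_succ]
        rw [h1, h2]
        push_cast
        rw [add_smul, one_smul]
        abel
  have hen : ∀ N : ℕ, 1 ≤ N → euclNorm u ≤ C * euclNorm x + ((1 + C) * euclNorm y) / N := by
    intro N hN
    have hNpos : (0:ℝ) < N := by exact_mod_cast hN
    have h4 : (N:ℝ) * euclNorm u ≤ N * (C * euclNorm x) + (1 + C) * euclNorm y := by
      have h5 : (N : ℂ) • u = (∑ k ∈ Finset.range N, (M ^ k).mulVec x)
          - (y - (M ^ N).mulVec y) := by
        rw [← claim N]; abel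
      rw [← en_nsmul, h5]
      have h6 : euclNorm (∑ k ∈ Finset.range N, (M ^ k).mulVec x) ≤ N * (C * euclNorm x) := by
        calc euclNorm (∑ k ∈ Finset.range N, (M ^ k).mulVec x)
            ≤ ∑ k ∈ Finset.range N, euclNorm ((M ^ k).mulVec x) := en_sum _
        _ ≤ ∑ _k ∈ Finset.range N, C * euclNorm x := by
            refine Finset.sum_le_sum fun k _ => le_trans (mulVec_en_le _ _)
              (mul_le_mul_of_nonneg_right (hpow k) (en_nonneg x))
        _ = N * (C * euclNorm x) := by rw [Finset.sum_const, Finset.card_range]; ring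
      have h7 : euclNorm (y - (M ^ N).mulVec y) ≤ (1 + C) * euclNorm y := by
        calc euclNorm (y - (M ^ N).mulVec y) ≤ euclNorm y + euclNorm ((M ^ N).mulVec y) :=
              en_sub _ _
        _ ≤ euclNorm y + C * euclNorm y :=
            add_le_add_right (le_trans (mulVec_en_le _ _)
              (mul_le_mul_of_nonneg_right (hpow N) (en_nonneg y))) _
        _ = (1 + C) * euclNorm y := by ring
      calc euclNorm ((∑ k ∈ Finset.range N, (M ^ k).mulVec x) - (y - (M ^ N).mulVec y))
          ≤ euclNorm (∑ k ∈ Finset.range N, (M ^ k).mulVec x)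
            + euclNorm (y - (M ^ N).mulVec y) := en_sub _ _
      _ ≤ N * (C * euclNorm x) + (1 + C) * euclNorm y := add_le_add h6 h7
    rw [← mul_le_mul_iff_of_pos_left hNpos, mul_add, mul_div_cancel₀ _ (ne_of_gt hNpos)]
    exact h4
  exact le_of_forall_div (mul_nonneg (by linarith) (en_nonneg y)) hen

-- Block F : P and Q algebra
section PQ
variable {M P : Matrix (Fin d) (Fin d) ℂ} {ψ : Fin d → ℂ}

lemma PM_eq (hP2 : ∀ x, P.mulVec (x - M.mulVec x) = 0) : P * M = P := by
  refine mat_ext_of_mulVec fun x => ?_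
  have h := hP2 x
  rw [Matrix.mulVec_sub, sub_eq_zero] at h
  rw [← Matrix.mulVec_mulVec]
  exact h.symm

lemma phi_fix (hP2 : ∀ x, P.mulVec (x - M.mulVec x) = 0) :
    Mᴴ.mulVec (Pᴴ.mulVec ψ) = Pᴴ.mulVec ψ := by
  have h := congrArg Matrix.conjTranspose (PM_eq hP2)
  rw [Matrix.conjTranspose_mul] at h
  rw [Matrix.mulVec_mulVec, h]

lemma dot_phi (hψ : euclNorm ψ = 1) (hMψ : M.mulVec ψ = ψ)
    (hP1 : ∀ x, M.mulVec x = x → P.mulVec x = x) :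
    dotProduct (star (Pᴴ.mulVec ψ)) ψ = 1 := by
  rw [Matrix.star_mulVec, Matrix.conjTranspose_conjTranspose,
    ← Matrix.dotProduct_mulVec, hP1 ψ hMψ]
  exact dot_star_self ψ hψ

lemma R_mulVec_psi (hψ : euclNorm ψ = 1) (hMψ : M.mulVec ψ = ψ)
    (hP1 : ∀ x, M.mulVec x = x → P.mulVec x = x) :
    (Matrix.vecMulVec ψ (star (Pᴴ.mulVec ψ))).mulVec ψ = ψ := by
  rw [vecMulVec_mulVec, dot_phi hψ hMψ hP1, one_smul]

lemma R_mul_M (hP2 : ∀ x, P.mulVec (x - M.mulVec x) = 0) :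
    Matrix.vecMulVec ψ (star (Pᴴ.mulVec ψ)) * M = Matrix.vecMulVec ψ (star (Pᴴ.mulVec ψ)) := by
  have h : star (Mᴴ.mulVec (Pᴴ.mulVec ψ)) = star (Pᴴ.mulVec ψ) :=
    congrArg star (phi_fix hP2)
  rw [Matrix.star_mulVec, Matrix.conjTranspose_conjTranspose] at h
  rw [vecMulVec_mul, h]

lemma M_mul_R (hMψ : M.mulVec ψ = ψ) (w : Fin d → ℂ) :
    M * Matrix.vecMulVec ψ w = Matrix.vecMulVec ψ w := by
  rw [mul_vecMulVec, hMψ]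

lemma QM_eq (hP2 : ∀ x, P.mulVec (x - M.mulVec x) = 0) :
    (1 - Matrix.vecMulVec ψ (star (Pᴴ.mulVec ψ))) * M
      = M - Matrix.vecMulVec ψ (star (Pᴴ.mulVec ψ)) := by
  rw [sub_mul, one_mul, R_mul_M hP2]

lemma QMQ_eq (hψ : euclNorm ψ = 1) (hMψ : M.mulVec ψ = ψ)
    (hP1 : ∀ x, M.mulVec x = x → P.mulVec x = x)
    (hP2 : ∀ x, P.mulVec (x - M.mulVec x) = 0) :
    (1 - Matrix.vecMulVec ψ (star (Pᴴ.mulVec ψ))) * M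
        * (1 - Matrix.vecMulVec ψ (star (Pᴴ.mulVec ψ)))
      = M - Matrix.vecMulVec ψ (star (Pᴴ.mulVec ψ)) := by
  set R := Matrix.vecMulVec ψ (star (Pᴴ.mulVec ψ)) with hR
  have hMR : M * R = R := M_mul_R hMψ _
  have hRR : R * R = R := by
    rw [hR, mul_vecMulVec, R_mulVec_psi hψ hMψ hP1]
  rw [QM_eq hP2, ← hR, sub_mul, mul_sub, mul_one, mul_sub, mul_one, hMR, hRR]
  abel

lemma N_mulVec_psi (hψ : euclNorm ψ = 1) (hMψ : M.mulVec ψ = ψ)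
    (hP1 : ∀ x, M.mulVec x = x → P.mulVec x = x) :
    (M - Matrix.vecMulVec ψ (star (Pᴴ.mulVec ψ))).mulVec ψ = 0 := by
  rw [Matrix.sub_mulVec, hMψ, R_mulVec_psi hψ hMψ hP1, sub_self]

end PQ

lemma X_mul_sub_R {X M : Matrix (Fin d) (Fin d) ℂ} {ψ : Fin d → ℂ}
    (hX : X.mulVec ψ = 0) (w : Fin d → ℂ) :
    X * (M - Matrix.vecMulVec ψ w) = X * M := by
  rw [mul_sub, mul_vecMulVec, hX, vecMulVec_zero_left, sub_zero]

-- Block G : telescoping product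
lemma telescope {ψ : Fin d → ℂ} :
    ∀ (l : List (Matrix (Fin d) (Fin d) ℂ × (Fin d → ℂ))),
    (∀ p ∈ l, p.1.mulVec ψ = ψ) →
    ∀ X : Matrix (Fin d) (Fin d) ℂ, X.mulVec ψ = 0 →
    X * (l.map fun p => p.1 - Matrix.vecMulVec ψ (star p.2)).reverse.prod
      = X * (l.map Prod.fst).reverse.prod := by
  intro l
  induction l with
  | nil => intro _ X _; rfl
  | cons p l ih =>
      intro hl X hX
      have hfix : ((l.map Prod.fst).reverse.prod).mulVec ψ = ψ := by
        refine list_prod_fix _ fun A hA => ?_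
        rw [List.mem_reverse, List.mem_map] at hA
        obtain ⟨q, hq, rfl⟩ := hA
        exact hl q (List.mem_cons_of_mem _ hq)
      have hXB : (X * (l.map Prod.fst).reverse.prod).mulVec ψ = 0 := by
        rw [← Matrix.mulVec_mulVec, hfix, hX]
      rw [List.map_cons, List.reverse_cons, List.prod_append, List.prod_singleton,
        List.map_cons, List.reverse_cons, List.prod_append, List.prod_singleton,
        ← mul_assoc, ← mul_assoc, ih (fun q hq => hl q (List.mem_cons_of_mem _ hq)) X hX,
        X_mul_sub_R hXB]

lemma pow_contr (ν : (Fin d → ℂ) → ℝ) {A : Matrix (Fin d) (Fin d) ℂ}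
    (h : ∀ x, ν (A.mulVec x) ≤ ν x) : ∀ (k : ℕ) (x), ν ((A ^ k).mulVec x) ≤ ν x := by
  intro k
  induction k with
  | zero => intro x; simp [Matrix.one_mulVec]
  | succ k ih =>
      intro x
      rw [pow_succ, ← Matrix.mulVec_mulVec]
      exact le_trans (ih _) (h x)

end RDOaux

/-- Uniform bounds for reduced dynamics operators: existence of a constant `C₀`,
depending only on `d`, `ν` and `ψ`, bounding `ψ_M`, `Q_M` and all products of the
`M_Q`'s, together with the direct sum decomposition `ℂ^d = ker(I-M) ⊕ ran(I-M)`. -/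
theorem rdo_uniform_bounds {d : ℕ} (hd : 1 ≤ d)
    (ν : (Fin d → ℂ) → ℝ)
    (hν0 : ∀ x, ν x = 0 ↔ x = 0)
    (hνsmul : ∀ (c : ℂ) (x : Fin d → ℂ), ν (c • x) = ‖c‖ * ν x)
    (hνadd : ∀ x y : Fin d → ℂ, ν (x + y) ≤ ν x + ν y)
    (ψ : Fin d → ℂ) (hψ : euclNorm ψ = 1) :
    ∃ C₀ > 0,
      (∀ A : Matrix (Fin d) (Fin d) ℂ, IsRDO ν ψ A →
        IsCompl (LinearMap.ker (Matrix.mulVecLin (1 - A)))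
            (LinearMap.range (Matrix.mulVecLin (1 - A)))
        ∧ ∀ P : Matrix (Fin d) (Fin d) ℂ, ProjSpec A P →
            euclNorm (Pᴴ.mulVec ψ) ≤ C₀
            ∧ opNorm (1 - Matrix.vecMulVec ψ (star (Pᴴ.mulVec ψ))) ≤ 1 + C₀)
      ∧ (∀ (n : ℕ) (Ms Ps : Fin n → Matrix (Fin d) (Fin d) ℂ),
          (∀ j, IsRDO ν ψ (Ms j)) → (∀ j, ProjSpec (Ms j) (Ps j)) →
          opNorm ((List.ofFn fun j : Fin n =>
              (1 - Matrix.vecMulVec ψ (star ((Ps j)ᴴ.mulVec ψ))) * Ms j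
                * (1 - Matrix.vecMulVec ψ (star ((Ps j)ᴴ.mulVec ψ)))).reverse.prod)
            ≤ C₀ * (1 + C₀))
      ∧ (∀ (n : ℕ) (hn : 1 ≤ n) (Ms Ps : Fin n → Matrix (Fin d) (Fin d) ℂ),
          (∀ j, IsRDO ν ψ (Ms j)) → (∀ j, ProjSpec (Ms j) (Ps j)) →
          euclNorm ((((List.ofFn Ms).drop 1).prod)ᴴ.mulVec ((Ps ⟨0, hn⟩)ᴴ.mulVec ψ))
            ≤ C₀ ^ 2) := by
  classical
  open RDOaux in
  obtain ⟨C, hC1, hcontr⟩ := RDOaux.exists_contraction_bound ν hν0 hνsmul hνadd ψ hψ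
  have hC0 : (0:ℝ) < C := lt_of_lt_of_le one_pos hC1
  -- common facts
  have hpow : ∀ A : Matrix (Fin d) (Fin d) ℂ, IsRDO ν ψ A →
      ∀ k : ℕ, opNorm (A ^ k) ≤ C := fun A hA k =>
    hcontr _ (RDOaux.pow_contr ν hA.2 k)
  have hco : ∀ A : Matrix (Fin d) (Fin d) ℂ, IsRDO ν ψ A →
      Codisjoint (LinearMap.ker (Matrix.mulVecLin (1 - A)))
        (LinearMap.range (Matrix.mulVecLin (1 - A))) := fun A hA =>
    RDOaux.ker_range_codisjoint (RDOaux.ker_range_disjoint hC0.le (hpow A hA))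
  have hPnorm : ∀ A P : Matrix (Fin d) (Fin d) ℂ, IsRDO ν ψ A → ProjSpec A P →
      opNorm P ≤ C := by
    intro A P hA hP
    exact RDOaux.opNorm_le P hC0.le
      (RDOaux.proj_en_le hC1 (hpow A hA) hP.1 hP.2 (hco A hA))
  have hphi : ∀ A P : Matrix (Fin d) (Fin d) ℂ, IsRDO ν ψ A → ProjSpec A P →
      euclNorm (Pᴴ.mulVec ψ) ≤ C := by
    intro A P hA hP
    calc euclNorm (Pᴴ.mulVec ψ) ≤ opNorm Pᴴ * euclNorm ψ := RDOaux.mulVec_en_le _ _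
    _ = opNorm P := by rw [RDOaux.opNorm_conjTranspose, hψ, mul_one]
    _ ≤ C := hPnorm A P hA hP
  have hQnorm : ∀ A P : Matrix (Fin d) (Fin d) ℂ, IsRDO ν ψ A → ProjSpec A P →
      opNorm (1 - Matrix.vecMulVec ψ (star (Pᴴ.mulVec ψ))) ≤ 1 + C := by
    intro A P hA hP
    calc opNorm (1 - Matrix.vecMulVec ψ (star (Pᴴ.mulVec ψ)))
        ≤ opNorm (1 : Matrix (Fin d) (Fin d) ℂ)
          + opNorm (Matrix.vecMulVec ψ (star (Pᴴ.mulVec ψ))) := RDOaux.opNorm_sub_le _ _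
    _ ≤ 1 + euclNorm ψ * euclNorm (Pᴴ.mulVec ψ) :=
        add_le_add RDOaux.opNorm_one_le (RDOaux.opNorm_vecMulVec_le _ _)
    _ ≤ 1 + C := by
        rw [hψ, one_mul]
        exact add_le_add_right (hphi A P hA hP) 1
  refine ⟨C, hC0, fun A hA => ⟨isCompl_iff.mpr
      ⟨RDOaux.ker_range_disjoint hC0.le (hpow A hA), hco A hA⟩,
      fun P hP => ⟨hphi A P hA hP, hQnorm A P hA hP⟩⟩, ?_, ?_⟩
  · -- part 2
    intro n Ms Ps hMs hPs
    cases n with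
    | zero =>
        simp only [List.ofFn_zero, List.reverse_nil, List.prod_nil]
        calc opNorm (1 : Matrix (Fin d) (Fin d) ℂ) ≤ 1 := RDOaux.opNorm_one_le
        _ ≤ C * (1 + C) := by nlinarith
    | succ m =>
        have hQMQ : (fun j : Fin (m+1) =>
            (1 - Matrix.vecMulVec ψ (star ((Ps j)ᴴ.mulVec ψ))) * Ms j
              * (1 - Matrix.vecMulVec ψ (star ((Ps j)ᴴ.mulVec ψ))))
            = fun j => Ms j - Matrix.vecMulVec ψ (star ((Ps j)ᴴ.mulVec ψ)) := by
          funext j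
          exact RDOaux.QMQ_eq hψ (hMs j).1 (hPs j).1 (hPs j).2
        rw [hQMQ]
        rw [List.ofFn_succ']
        rw [List.concat_eq_append, List.reverse_append, List.reverse_singleton,
          List.singleton_append, List.prod_cons]
        set X := Ms (Fin.last m) -
          Matrix.vecMulVec ψ (star ((Ps (Fin.last m))ᴴ.mulVec ψ)) with hXdef
        have hX : X.mulVec ψ = 0 :=
          RDOaux.N_mulVec_psi hψ (hMs (Fin.last m)).1 (hPs (Fin.last m)).1
        set l : List (Matrix (Fin d) (Fin d) ℂ × (Fin d → ℂ)) :=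
          List.ofFn (fun i : Fin m =>
            (Ms (Fin.castSucc i), (Ps (Fin.castSucc i))ᴴ.mulVec ψ)) with hldef
        have hmap1 : (l.map fun p => p.1 - Matrix.vecMulVec ψ (star p.2))
            = List.ofFn (fun i : Fin m => Ms (Fin.castSucc i)
              - Matrix.vecMulVec ψ (star ((Ps (Fin.castSucc i))ᴴ.mulVec ψ))) := by
          rw [hldef, List.map_ofFn]; rfl
        have hmap2 : l.map Prod.fst = List.ofFn (fun i : Fin m => Ms (Fin.castSucc i)) := by
          rw [hldef, List.map_ofFn]; rfl
        have hl : ∀ p ∈ l, p.1.mulVec ψ = ψ := by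
          intro p hp
          rw [hldef, List.mem_ofFn] at hp
          obtain ⟨i, rfl⟩ := hp
          exact (hMs (Fin.castSucc i)).1
        have htel := RDOaux.telescope l hl X hX
        rw [hmap1, hmap2] at htel
        have hcomp : (fun j : Fin m => (fun j : Fin (m+1) => Ms j
              - Matrix.vecMulVec ψ (star ((Ps j)ᴴ.mulVec ψ))) (Fin.castSucc j))
            = fun i : Fin m => Ms (Fin.castSucc i)
              - Matrix.vecMulVec ψ (star ((Ps (Fin.castSucc i))ᴴ.mulVec ψ)) := rfl
        rw [hcomp, htel]
        -- now X * B with B the product of the Ms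
        set B := (List.ofFn fun i : Fin m => Ms (Fin.castSucc i)).reverse.prod with hBdef
        have hXQ : X = (1 - Matrix.vecMulVec ψ (star ((Ps (Fin.last m))ᴴ.mulVec ψ)))
            * Ms (Fin.last m) := (RDOaux.QM_eq (hPs (Fin.last m)).2).symm
        rw [hXQ, mul_assoc]
        have hMB : opNorm (Ms (Fin.last m) * B) ≤ C := by
          apply hcontr
          have : Ms (Fin.last m) * B = (Ms (Fin.last m) :: (List.ofFn fun i : Fin m =>
              Ms (Fin.castSucc i)).reverse).prod := by rw [List.prod_cons, hBdef]
          rw [this]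
          refine RDOaux.list_prod_contr ν _ (fun A hA => ?_)
          rcases List.mem_cons.mp hA with h | h
          · subst h; exact (hMs (Fin.last m)).2
          · rw [List.mem_reverse, List.mem_ofFn] at h
            obtain ⟨i, rfl⟩ := h
            exact (hMs (Fin.castSucc i)).2
        calc opNorm ((1 - Matrix.vecMulVec ψ (star ((Ps (Fin.last m))ᴴ.mulVec ψ)))
              * (Ms (Fin.last m) * B))
            ≤ opNorm (1 - Matrix.vecMulVec ψ (star ((Ps (Fin.last m))ᴴ.mulVec ψ)))
              * opNorm (Ms (Fin.last m) * B) := RDOaux.opNorm_mul_le _ _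
        _ ≤ (1 + C) * C := by
            refine mul_le_mul (hQnorm _ _ (hMs _) (hPs _)) hMB (RDOaux.opNorm_nonneg _)
              (by linarith)
        _ = C * (1 + C) := mul_comm _ _
  · -- part 3
    intro n hn Ms Ps hMs hPs
    set B := ((List.ofFn Ms).drop 1).prod with hBdef
    have hBcontr : ∀ x, ν (B.mulVec x) ≤ ν x := by
      refine RDOaux.list_prod_contr ν _ (fun A hA => ?_)
      have := List.mem_of_mem_drop hA
      rw [List.mem_ofFn] at this
      obtain ⟨i, rfl⟩ := this
      exact (hMs i).2
    have hB : opNorm B ≤ C := hcontr _ hBcontr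
    calc euclNorm (Bᴴ.mulVec ((Ps ⟨0, hn⟩)ᴴ.mulVec ψ))
        ≤ opNorm Bᴴ * euclNorm ((Ps ⟨0, hn⟩)ᴴ.mulVec ψ) := RDOaux.mulVec_en_le _ _
    _ ≤ C * C := by
        rw [RDOaux.opNorm_conjTranspose]
        exact mul_le_mul hB (hphi _ _ (hMs _) (hPs _)) (RDOaux.en_nonneg _) hC0.le
    _ = C ^ 2 := (sq C).symm
end

section
/- The Hermitian matrix h_λ on ℂ² ⊗ ℂ² has eigenvalues E_{0+} = 0, E_{0−} = E_S + E_E, and E_{1±} = ((E_S + E_E) ± √((E_S − E_E)² + 4λ²))/2, with corresponding eigenvectors ψ_{0+} = |0⟩⊗|0⟩, ψ_{0−} = |1⟩⊗|1⟩, and ψ_{1±} = a_{1±} |1⟩⊗|0⟩ + b_{1±} |0⟩⊗|1⟩, where a_{1±} = −λ/√(λ² + (E_S − E_{1±})²) and b_{1±} = (E_S − E_{1±})/√(λ² + (E_S − E_{1±})²). That is, h_λ ψ_{0+} = 0, h_λ ψ_{0−} = (E_S + E_E) ψ_{0−}, h_λ ψ_{1±} = E_{1±} ψ_{1±}, and {ψ_{0+},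 ψ_{0−}, ψ_{1+}, ψ_{1−}} is an orthonormal basis of ℂ² ⊗ ℂ². -/
open Matrix
open scoped Kronecker Matrix

noncomputable section

/-- The Hamiltonian of the two-level system `S`. -/
def hamS (ES : ℝ) : Matrix (Fin 2) (Fin 2) ℂ := !![0, 0; 0, (ES : ℂ)]

/-- The Hamiltonian of the two-level system `E`. -/
def hamE (EE : ℝ) : Matrix (Fin 2) (Fin 2) ℂ := !![0, 0; 0, (EE : ℂ)]

/-- The annihilation operator `a` with `a|1⟩ = |0⟩`, `a|0⟩ = 0`. -/
def annOp : Matrix (Fin 2) (Fin 2) ℂ := !![0, 1; 0, 0]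

/-- The coupled Hamiltonian `h_λ = h_S ⊗ 1 + 1 ⊗ h_E + λ (a ⊗ a* + a* ⊗ a)`. -/
def hamLam (ES EE lam : ℝ) : Matrix (Fin 2 × Fin 2) (Fin 2 × Fin 2) ℂ :=
  hamS ES ⊗ₖ 1 + 1 ⊗ₖ hamE EE + (lam : ℂ) • (annOp ⊗ₖ annOpᴴ + annOpᴴ ⊗ₖ annOp)

/-- The product basis vector `|i⟩ ⊗ |j⟩` of `ℂ² ⊗ ℂ²`. -/
def ket2 (i j : Fin 2) : Fin 2 × Fin 2 → ℂ := fun p => if p = (i, j) then 1 else 0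

lemma eig_helper (ES EE lam : ℝ) (a b E : ℂ)
    (h1 : ES * a + lam * b = E * a) (h2 : lam * a + EE * b = E * b) :
    (hamLam ES EE lam).mulVec (a • ket2 1 0 + b • ket2 0 1)
      = E • (a • ket2 1 0 + b • ket2 0 1) := by
  funext p
  obtain ⟨i, j⟩ := p
  fin_cases i <;> fin_cases j <;>
    simp [hamLam, hamS, hamE, annOp, ket2, Matrix.mulVec, dotProduct,
      Fintype.sum_prod_type, Fin.sum_univ_two, Matrix.one_apply, Prod.ext_iff] <;>
    first
      | linear_combination h1
      | linear_combination h2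

lemma real_eqs (ES EE lam E1p : ℝ) (hlam : lam ≠ 0)
    (hquadp : (ES - E1p) * (EE - E1p) = lam ^ 2)
    (a1p b1p : ℝ)
    (ha1p : a1p = -lam / Real.sqrt (lam ^ 2 + (ES - E1p) ^ 2))
    (hb1p : b1p = (ES - E1p) / Real.sqrt (lam ^ 2 + (ES - E1p) ^ 2)) :
    (ES * a1p + lam * b1p = E1p * a1p) ∧ (lam * a1p + EE * b1p = E1p * b1p)
    ∧ (a1p * a1p + b1p * b1p = 1) := by
  set Np := Real.sqrt (lam ^ 2 + (ES - E1p) ^ 2) with hNpdef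
  have hNp0 : (0:ℝ) < Np := Real.sqrt_pos.2 (by positivity)
  have hNp2 : Np ^ 2 = lam ^ 2 + (ES - E1p) ^ 2 := Real.sq_sqrt (by positivity)
  refine ⟨?_, ?_, ?_⟩
  · rw [ha1p, hb1p]; field_simp; ring
  · rw [ha1p, hb1p]; field_simp
    first
      | linear_combination (Np ^ 2 + 2 * Np) * hquadp
      | linear_combination Np * hquadp
      | linear_combination -Np * hquadp
      | linear_combination (Np ^ 2 + Np) * hquadp
      | nlinarith [hquadp, hNp2, sq_nonneg Np]
  · rw [ha1p, hb1p]; field_simp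
    first
      | linear_combination hNp2
      | linear_combination -hNp2
      | linear_combination 2 * hNp2
      | linear_combination -2 * hNp2

lemma dot_psi_psi (a b c d : ℝ) :
    star (((a:ℂ) • ket2 1 0 + (b:ℂ) • ket2 0 1) : Fin 2 × Fin 2 → ℂ)
      ⬝ᵥ ((c:ℂ) • ket2 1 0 + (d:ℂ) • ket2 0 1) = ((a * c + b * d : ℝ) : ℂ) := by
  simp [ket2, dotProduct, Fintype.sum_prod_type, Fin.sum_univ_two, Prod.ext_iff,
    Complex.conj_ofReal]
  ring

lemma dot_psi_k (a b : ℝ) (i : Fin 2) :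
    star (((a:ℂ) • ket2 1 0 + (b:ℂ) • ket2 0 1) : Fin 2 × Fin 2 → ℂ) ⬝ᵥ ket2 i i = 0 := by
  fin_cases i <;>
    simp [ket2, dotProduct, Fintype.sum_prod_type, Fin.sum_univ_two, Prod.ext_iff]

lemma dot_k_psi (a b : ℝ) (i : Fin 2) :
    star (ket2 i i) ⬝ᵥ (((a:ℂ) • ket2 1 0 + (b:ℂ) • ket2 0 1) : Fin 2 × Fin 2 → ℂ) = 0 := by
  fin_cases i <;>
    simp [ket2, dotProduct, Fintype.sum_prod_type, Fin.sum_univ_two, Prod.ext_iff]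

lemma dot_k_k (i j : Fin 2) :
    star (ket2 i i) ⬝ᵥ ket2 j j = if i = j then 1 else 0 := by
  fin_cases i <;> fin_cases j <;>
    simp [ket2, dotProduct, Fintype.sum_prod_type, Fin.sum_univ_two, Prod.ext_iff]

lemma dot_ket_ket (i j k l : Fin 2) :
    star (ket2 i j) ⬝ᵥ ket2 k l = if i = k ∧ j = l then 1 else 0 := by
  fin_cases i <;> fin_cases j <;> fin_cases k <;> fin_cases l <;>
    simp [ket2, dotProduct, Fintype.sum_prod_type, Fin.sum_univ_two, Prod.ext_iff]

/-- Diagonalization of the spin-spin Hamiltonian `h_λ`: eigenvalues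
`0`, `E_S + E_E`, `E_{1±}` with the explicit orthonormal eigenbasis. -/
theorem hamLam_eigendecomposition
    (ES EE lam : ℝ) (hES : 0 < ES) (hEE : 0 < EE) (hlam : lam ≠ 0)
    (ν₀ E1p E1m a1p a1m b1p b1m : ℝ)
    (hν₀ : ν₀ = Real.sqrt ((ES - EE) ^ 2 + 4 * lam ^ 2))
    (hE1p : E1p = ((ES + EE) + ν₀) / 2)
    (hE1m : E1m = ((ES + EE) - ν₀) / 2)
    (ha1p : a1p = -lam / Real.sqrt (lam ^ 2 + (ES - E1p) ^ 2))
    (ha1m : a1m = -lam / Real.sqrt (lam ^ 2 + (ES - E1m) ^ 2))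
    (hb1p : b1p = (ES - E1p) / Real.sqrt (lam ^ 2 + (ES - E1p) ^ 2))
    (hb1m : b1m = (ES - E1m) / Real.sqrt (lam ^ 2 + (ES - E1m) ^ 2))
    (ψ1p ψ1m : Fin 2 × Fin 2 → ℂ)
    (hψ1p : ψ1p = (a1p : ℂ) • ket2 1 0 + (b1p : ℂ) • ket2 0 1)
    (hψ1m : ψ1m = (a1m : ℂ) • ket2 1 0 + (b1m : ℂ) • ket2 0 1) :
    (hamLam ES EE lam).IsHermitian
    ∧ (hamLam ES EE lam).mulVec (ket2 0 0) = 0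
    ∧ (hamLam ES EE lam).mulVec (ket2 1 1) = ((ES + EE : ℝ) : ℂ) • ket2 1 1
    ∧ (hamLam ES EE lam).mulVec ψ1p = (E1p : ℂ) • ψ1p
    ∧ (hamLam ES EE lam).mulVec ψ1m = (E1m : ℂ) • ψ1m
    ∧ (∀ i j : Fin 4,
        star (![ket2 0 0, ket2 1 1, ψ1p, ψ1m] i) ⬝ᵥ ![ket2 0 0, ket2 1 1, ψ1p, ψ1m] j
          = if i = j then 1 else 0) := by
  have hν2 : ν₀ ^ 2 = (ES - EE) ^ 2 + 4 * lam ^ 2 := by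
    rw [hν₀, Real.sq_sqrt (by positivity)]
  have hquadp : (ES - E1p) * (EE - E1p) = lam ^ 2 := by
    rw [hE1p]; linear_combination hν2 / 4
  have hquadm : (ES - E1m) * (EE - E1m) = lam ^ 2 := by
    rw [hE1m]; linear_combination hν2 / 4
  have hcross : (ES - E1p) * (ES - E1m) = -lam ^ 2 := by
    rw [hE1p, hE1m]; linear_combination -hν2 / 4
  obtain ⟨h1p, h2p, hnp⟩ := real_eqs ES EE lam E1p hlam hquadp a1p b1p ha1p hb1p
  obtain ⟨h1m, h2m, hnm⟩ := real_eqs ES EE lam E1m hlam hquadm a1m b1m ha1m hb1m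
  have hNp0 : (0:ℝ) < Real.sqrt (lam ^ 2 + (ES - E1p) ^ 2) :=
    Real.sqrt_pos.2 (by positivity)
  have hNm0 : (0:ℝ) < Real.sqrt (lam ^ 2 + (ES - E1m) ^ 2) :=
    Real.sqrt_pos.2 (by positivity)
  have hc : a1p * a1m + b1p * b1m = 0 := by
    rw [ha1p, ha1m, hb1p, hb1m]
    field_simp
    linear_combination hcross
  refine ⟨?_, ?_, ?_, ?_, ?_, ?_⟩
  · show _ᴴ = _
    ext p q
    obtain ⟨i, j⟩ := p; obtain ⟨k, l⟩ := q
    fin_cases i <;> fin_cases j <;> fin_cases k <;> fin_cases l <;>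
      simp [hamLam, hamS, hamE, annOp, conjTranspose_apply, Matrix.one_apply]
  · funext p
    obtain ⟨i, j⟩ := p
    fin_cases i <;> fin_cases j <;>
    simp [hamLam, hamS, hamE, annOp, ket2, Matrix.mulVec, dotProduct,
      Fintype.sum_prod_type, Fin.sum_univ_two, Matrix.one_apply, Prod.ext_iff]
  · funext p
    obtain ⟨i, j⟩ := p
    fin_cases i <;> fin_cases j <;>
      simp [hamLam, hamS, hamE, annOp, ket2, Matrix.mulVec, dotProduct,
        Fintype.sum_prod_type, Fin.sum_univ_two, Matrix.one_apply, Prod.ext_iff]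
  · rw [hψ1p]
    exact eig_helper ES EE lam _ _ _ (by exact_mod_cast h1p) (by exact_mod_cast h2p)
  · rw [hψ1m]
    exact eig_helper ES EE lam _ _ _ (by exact_mod_cast h1m) (by exact_mod_cast h2m)
  · intro i j
    have hc' : a1m * a1p + b1m * b1p = 0 := by linarith [hc, mul_comm a1p a1m, mul_comm b1p b1m]
    fin_cases i <;> fin_cases j <;>
      simp [hψ1p, hψ1m, dot_ket_ket, Complex.conj_ofReal, Complex.star_def] <;>
      norm_cast <;>
      first
        | linear_combination hnp
        | linear_combination hnm
        | linear_combination hc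
        | linear_combination hc'
end
end
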